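/- arXiv:math/9706214 — 2 statements merged into one kernel-verified Lean document; each statement's English description precedes it below -/
import Mathlib

section
/- Let X be a real Banach space whose norm is locally uniformly convex and uniformly smooth, let p > 1, and let f : X → ℝ ∪ {+∞} be proper, lower semicontinuous and bounded below. Then for every n ∈ ℕ one has inf_X f ≤ Δ_n^p f(x) ≤ f(x) for all x ∈ X, and the set of minimizers of Δ_n^p f equals the set of minimizers of f, i.e. {x ∈ X : Δ_n^p f(x) = inf_X Δ_n^p f} = {x ∈ X : f(x) = inf_X f}. -/
open scoped BigOperators

/-- The convex envelope of a function `h : X → ℝ`, given by the infimum over all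
finite convex combinations. -/
noncomputable def convEnv {X : Type*} [NormedAddCommGroup X] [NormedSpace ℝ X]
    (h : X → ℝ) (x : X) : ℝ :=
  sInf { r : ℝ | ∃ (m : ℕ) (l : Fin m → ℝ) (z : Fin m → X),
    (∀ i, 0 < l i) ∧ ∑ i, l i = 1 ∧ ∑ i, l i • z i = x ∧ ∑ i, l i * h (z i) = r }

/-- The kernel `K_p(x,y) = 2^(p-1)‖x‖^p + 2^(p-1)‖y‖^p - ‖x+y‖^p`. -/
noncomputable def Kp {X : Type*} [NormedAddCommGroup X] (p : ℝ) (x y : X) : ℝ :=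
  2 ^ (p - 1) * ‖x‖ ^ p + 2 ^ (p - 1) * ‖y‖ ^ p - ‖x + y‖ ^ p

/-- `g_n^p(x) = inf_y (f(y) + n K_p(x,y)) + 2^(p-1) n ‖x‖^p`. -/
noncomputable def gnp {X : Type*} [NormedAddCommGroup X] (p : ℝ) (f : X → EReal)
    (n : ℕ) (x : X) : ℝ :=
  (⨅ y, f y + (((n : ℝ) * Kp p x y : ℝ) : EReal)).toReal + 2 ^ (p - 1) * (n : ℝ) * ‖x‖ ^ p

/-- `Δ_n^p f = co(g_n^p) - 2^(p-1) n ‖·‖^p`. -/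
noncomputable def Delta {X : Type*} [NormedAddCommGroup X] [NormedSpace ℝ X]
    (p : ℝ) (f : X → EReal) (n : ℕ) (x : X) : ℝ :=
  convEnv (gnp p f n) x - 2 ^ (p - 1) * (n : ℝ) * ‖x‖ ^ p


open Set

set_option linter.unusedSectionVars false
set_option linter.unusedVariables false

section rpowLemmas
variable {p : ℝ} (hp : 1 < p)

/-- tangent line inequality for rpow -/
lemma rpow_tangent (hp : 1 < p) {s t : ℝ} (hs : 0 ≤ s) (ht : 0 ≤ t) :
    s ^ p + p * s ^ (p - 1) * (t - s) ≤ t ^ p := by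
  rcases hs.eq_or_lt with h | h
  · subst h
    rw [Real.zero_rpow (by positivity), Real.zero_rpow (by linarith)]
    simpa using Real.rpow_nonneg ht p
  · have hu : -1 ≤ t / s - 1 := by
      have := div_nonneg ht h.le
      linarith
    have key := one_add_mul_self_le_rpow_one_add hu hp.le
    have h1 : (1 + (t / s - 1)) = t / s := by ring
    rw [h1] at key
    have h2 : (t / s) ^ p = t ^ p / s ^ p := Real.div_rpow ht h.le p
    rw [h2] at key
    have hsp : (0:ℝ) < s ^ p := Real.rpow_pos_of_pos h p
    have key2 : (1 + p * (t / s - 1)) * s ^ p ≤ t ^ p := by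
      rw [← le_div_iff₀ hsp]
      linarith [key]
    have hsp1 : s ^ (p - 1) = s ^ p / s := by
      rw [Real.rpow_sub h, Real.rpow_one]
    calc s ^ p + p * s ^ (p - 1) * (t - s)
        = (1 + p * (t / s - 1)) * s ^ p := by
          rw [hsp1]; field_simp
      _ ≤ t ^ p := key2

lemma two_point_rpow (hp : 1 < p) {a b : ℝ} (ha : 0 ≤ a) (hb : 0 ≤ b) :
    (a + b) ^ p ≤ 2 ^ (p - 1) * (a ^ p + b ^ p) := by
  have hcx := (convexOn_rpow hp.le).2 (mem_Ici.2 ha) (mem_Ici.2 hb)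
    (by norm_num : (0:ℝ) ≤ 1/2) (by norm_num : (0:ℝ) ≤ 1/2) (by norm_num)
  simp only [smul_eq_mul] at hcx
  have h2 : (2:ℝ) ^ (p - 1) = 2 ^ p / 2 := by
    rw [Real.rpow_sub (by norm_num : (0:ℝ) < 2), Real.rpow_one]
  have hab : a + b = 2 * (1/2 * a + 1/2 * b) := by ring
  have h3 : (a + b) ^ p = 2 ^ p * (1/2 * a + 1/2 * b) ^ p := by
    rw [hab, Real.mul_rpow (by norm_num) (by linarith)]
  rw [h3, h2]
  have h2p : (0:ℝ) < 2 ^ p := Real.rpow_pos_of_pos (by norm_num) p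
  calc 2 ^ p * (1/2 * a + 1/2 * b) ^ p ≤ 2 ^ p * (1/2 * a ^ p + 1/2 * b ^ p) := by
        exact mul_le_mul_of_nonneg_left hcx h2p.le
    _ = 2 ^ p / 2 * (a ^ p + b ^ p) := by ring

lemma Kp_nonneg {X : Type*} [NormedAddCommGroup X] (hp : 1 < p) (x y : X) :
    0 ≤ Kp p x y := by
  have h1 : ‖x + y‖ ^ p ≤ (‖x‖ + ‖y‖) ^ p :=
    Real.rpow_le_rpow (norm_nonneg _) (norm_add_le x y) (by positivity)
  have h2 := two_point_rpow hp (norm_nonneg x) (norm_nonneg y)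
  unfold Kp
  nlinarith [h1, h2]

lemma Kp_self {X : Type*} [NormedAddCommGroup X] [NormedSpace ℝ X] (hp : 1 < p) (x : X) :
    Kp p x x = 0 := by
  unfold Kp
  have : (x + x) = (2:ℝ) • x := by
    rw [two_smul]
  rw [this, norm_smul]
  simp only [Real.norm_ofNat]
  rw [Real.mul_rpow (by norm_num) (norm_nonneg x)]
  have h2 : (2:ℝ) ^ (p - 1) = 2 ^ p / 2 := by
    rw [Real.rpow_sub (by norm_num : (0:ℝ) < 2), Real.rpow_one]
  rw [h2]; ring

/-- Lipschitz-type bound for rpow on [0,R] -/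
lemma rpow_lip (hp : 1 < p) {R t u : ℝ} (ht : 0 ≤ t) (hu : 0 ≤ u) (htR : t ≤ R) (huR : u ≤ R) :
    |t ^ p - u ^ p| ≤ p * R ^ (p - 1) * |t - u| := by
  have hR : 0 ≤ R := le_trans ht htR
  have key : ∀ a b : ℝ, 0 ≤ a → a ≤ b → b ≤ R → b ^ p - a ^ p ≤ p * R ^ (p-1) * (b - a) := by
    intro a b ha hab hbR
    have := rpow_tangent hp (le_trans ha hab) ha  -- b^p + p b^(p-1)(a-b) ≤ a^p
    have hmono : b ^ (p-1) ≤ R ^ (p-1) :=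
      Real.rpow_le_rpow (le_trans ha hab) hbR (by linarith)
    have h1 : b ^ p - a ^ p ≤ p * b ^ (p-1) * (b - a) := by nlinarith
    have h2 : b ^ (p-1) * (b-a) ≤ R ^ (p-1) * (b-a) :=
      mul_le_mul_of_nonneg_right hmono (by linarith)
    nlinarith
  rcases le_total u t with h | h
  · rw [abs_of_nonneg (by nlinarith [Real.rpow_le_rpow hu h (by positivity : (0:ℝ) ≤ p)]),
      abs_of_nonneg (by linarith)]
    exact key u t hu h htR
  · rw [abs_of_nonpos (by nlinarith [Real.rpow_le_rpow ht h (by positivity : (0:ℝ) ≤ p)]),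
      abs_of_nonpos (by linarith)]
    have := key t u ht h huR
    linarith

end rpowLemmas

section oneD
variable {p : ℝ}

private lemma cont_rpow (hp : 1 < p) : Continuous (fun t : ℝ => t ^ p) :=
  Real.continuous_rpow_const (by positivity)

/-- φ̃(t) = t^p - p s^(p-1) t is strictly monotone on [s,∞) -/
lemma phi_strictMonoOn (hp : 1 < p) {s : ℝ} (hs : 0 ≤ s) :
    StrictMonoOn (fun t : ℝ => t ^ p - p * s ^ (p-1) * t) (Ici s) := by
  apply strictMonoOn_of_deriv_pos (convex_Ici s)
  · exact ((cont_rpow hp).sub (continuous_const.mul continuous_id)).continuousOn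
  · intro t ht
    rw [interior_Ici] at ht
    have htpos : 0 < t := lt_of_le_of_lt hs ht
    have hd : HasDerivAt (fun t : ℝ => t ^ p - p * s ^ (p-1) * t)
        (p * t ^ (p-1) - p * s ^ (p-1)) t := by
      have h := (Real.hasDerivAt_rpow_const (p := p) (Or.inl htpos.ne')).sub
        ((hasDerivAt_id t).const_mul (p * s ^ (p-1)))
      simp only [mul_one] at h
      exact h
    rw [hd.deriv]
    have : s ^ (p-1) < t ^ (p-1) := by
      rcases hs.eq_or_lt with h | h
      · rw [← h, Real.zero_rpow (by linarith)]
        exact Real.rpow_pos_of_pos htpos _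
      · exact Real.rpow_lt_rpow hs ht (by linarith)
    nlinarith

lemma phi_strictAntiOn (hp : 1 < p) {s : ℝ} (hs : 0 < s) :
    StrictAntiOn (fun t : ℝ => t ^ p - p * s ^ (p-1) * t) (Icc 0 s) := by
  apply strictAntiOn_of_deriv_neg (convex_Icc 0 s)
  · exact ((cont_rpow hp).sub (continuous_const.mul continuous_id)).continuousOn
  · intro t ht
    rw [interior_Icc] at ht
    have htpos : 0 < t := ht.1
    have hd : HasDerivAt (fun t : ℝ => t ^ p - p * s ^ (p-1) * t)
        (p * t ^ (p-1) - p * s ^ (p-1)) t := by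
      have h := (Real.hasDerivAt_rpow_const (p := p) (Or.inl htpos.ne')).sub
        ((hasDerivAt_id t).const_mul (p * s ^ (p-1)))
      simp only [mul_one] at h
      exact h
    rw [hd.deriv]
    have : t ^ (p-1) < s ^ (p-1) := Real.rpow_lt_rpow htpos.le ht.2 (by linarith)
    nlinarith

/-- F(b) = 2^(p-1)(s^p + b^p) - (s+b)^p strictly monotone on [s,∞) -/
lemma F_strictMonoOn (hp : 1 < p) {s : ℝ} (hs : 0 ≤ s) :
    StrictMonoOn (fun b : ℝ => 2 ^ (p-1) * (s ^ p + b ^ p) - (s + b) ^ p) (Ici s) := by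
  apply strictMonoOn_of_deriv_pos (convex_Ici s)
  · apply ContinuousOn.sub
    · exact (continuous_const.mul (continuous_const.add (cont_rpow hp))).continuousOn
    · exact ((cont_rpow hp).comp (continuous_const.add continuous_id)).continuousOn
  · intro b hb
    rw [interior_Ici] at hb
    have hsb : s < b := hb
    have hbpos : 0 < b := lt_of_le_of_lt hs hb
    have hd : HasDerivAt (fun b : ℝ => 2 ^ (p-1) * (s ^ p + b ^ p) - (s + b) ^ p)
        (2 ^ (p-1) * (p * b ^ (p-1)) - p * (s + b) ^ (p-1)) b := by
      have h1 : HasDerivAt (fun b : ℝ => s ^ p + b ^ p) (p * b ^ (p-1)) b :=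
        (Real.hasDerivAt_rpow_const (Or.inl hbpos.ne')).const_add _
      have h2 : HasDerivAt (fun b : ℝ => (s + b) ^ p) (p * (s + b) ^ (p-1) * 1) b := by
        exact (Real.hasDerivAt_rpow_const (Or.inl (by positivity : s + b ≠ 0))).comp b
          ((hasDerivAt_id b).const_add s)
      have h := (h1.const_mul ((2:ℝ) ^ (p-1))).sub h2
      simp only [mul_one] at h
      exact h
    rw [hd.deriv]
    have key : (s + b) ^ (p-1) < 2 ^ (p-1) * b ^ (p-1) := by
      rw [← Real.mul_rpow (by norm_num) hbpos.le]
      exact Real.rpow_lt_rpow (by positivity) (by linarith) (by linarith)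
    nlinarith

lemma F_strictAntiOn (hp : 1 < p) {s : ℝ} (hs : 0 < s) :
    StrictAntiOn (fun b : ℝ => 2 ^ (p-1) * (s ^ p + b ^ p) - (s + b) ^ p) (Icc 0 s) := by
  apply strictAntiOn_of_deriv_neg (convex_Icc 0 s)
  · apply ContinuousOn.sub
    · exact (continuous_const.mul (continuous_const.add (cont_rpow hp))).continuousOn
    · exact ((cont_rpow hp).comp (continuous_const.add continuous_id)).continuousOn
  · intro b hb
    rw [interior_Icc] at hb
    have hbpos : 0 < b := hb.1
    have hd : HasDerivAt (fun b : ℝ => 2 ^ (p-1) * (s ^ p + b ^ p) - (s + b) ^ p)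
        (2 ^ (p-1) * (p * b ^ (p-1)) - p * (s + b) ^ (p-1)) b := by
      have h1 : HasDerivAt (fun b : ℝ => s ^ p + b ^ p) (p * b ^ (p-1)) b :=
        (Real.hasDerivAt_rpow_const (Or.inl hbpos.ne')).const_add _
      have h2 : HasDerivAt (fun b : ℝ => (s + b) ^ p) (p * (s + b) ^ (p-1) * 1) b := by
        exact (Real.hasDerivAt_rpow_const (Or.inl (by positivity : s + b ≠ 0))).comp b
          ((hasDerivAt_id b).const_add s)
      have h := (h1.const_mul ((2:ℝ) ^ (p-1))).sub h2
      simp only [mul_one] at h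
      exact h
    rw [hd.deriv]
    have key : 2 ^ (p-1) * b ^ (p-1) < (s + b) ^ (p-1) := by
      rw [← Real.mul_rpow (by norm_num) hbpos.le]
      exact Real.rpow_lt_rpow (by positivity) (by linarith [hb.2]) (by linarith)
    nlinarith

end oneD

section geomLemmas
variable {X : Type*} [NormedAddCommGroup X] [NormedSpace ℝ X] {p : ℝ}

set_option maxHeartbeats 1000000 in
/-- Bregman distance of `‖·‖^p` at `x` small forces closeness to `x` (LUR). -/
lemma breg_small
    (hLUR : ∀ x : X, ‖x‖ = 1 → ∀ ε : ℝ, 0 < ε → ∃ δ : ℝ, 0 < δ ∧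
      ∀ y : X, ‖y‖ = 1 → ε ≤ ‖x - y‖ → ‖x + y‖ / 2 ≤ 1 - δ)
    (hp : 1 < p) (x : X) (j : X →L[ℝ] ℝ) (hj : ∀ z, j z ≤ ‖z‖) (hjx : j x = ‖x‖) :
    ∀ ε : ℝ, 0 < ε → ∃ δ : ℝ, 0 < δ ∧ ∀ z : X,
      ‖z‖ ^ p - ‖x‖ ^ p - p * ‖x‖ ^ (p-1) * (j z - ‖x‖) ≤ δ → ‖z - x‖ ≤ ε := by
  intro ε hε
  by_cases hx : x = 0
  · refine ⟨(min ε 1) ^ p, Real.rpow_pos_of_pos (by positivity) p, fun z hz => ?_⟩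
    subst hx
    simp only [norm_zero, Real.zero_rpow (by positivity : p ≠ 0),
      Real.zero_rpow (sub_ne_zero.2 hp.ne'), mul_zero, zero_mul, sub_zero] at hz
    have hz2 : ‖z‖ ^ p ≤ (min ε 1) ^ p := by linarith
    have : ‖z‖ ≤ min ε 1 := by
      by_contra hcon
      push_neg at hcon
      exact absurd hz2 (not_le.2 (Real.rpow_lt_rpow (by positivity) hcon (by positivity)))
    rw [sub_zero]
    exact le_trans this (min_le_left _ _)
  · have hs : (0:ℝ) < ‖x‖ := norm_pos_iff.2 hx
    obtain ⟨s, hs_def⟩ : ∃ s : ℝ, ‖x‖ = s := ⟨‖x‖, rfl⟩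
    rw [hs_def] at hs hjx ⊢
    have hxh : ‖(s⁻¹ • x : X)‖ = 1 := by
      rw [norm_smul, norm_inv, Real.norm_of_nonneg (by linarith), hs_def]
      field_simp
    obtain ⟨δL, hδL, hL⟩ := hLUR (s⁻¹ • x) hxh (ε / (2 * (s + 1))) (by positivity)
    obtain ⟨α, hα, hα1, hαε, hαs⟩ : ∃ α : ℝ, 0 < α ∧ α ≤ 1 ∧ α ≤ ε/4 ∧ α ≤ s/2 :=
      ⟨min 1 (min (ε/4) (s/2)), by positivity, min_le_left _ _,
        le_trans (min_le_right _ _) (min_le_left _ _),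
        le_trans (min_le_right _ _) (min_le_right _ _)⟩
    have hsp1 : (0:ℝ) < s ^ (p-1) := Real.rpow_pos_of_pos hs _
    have hP : (0:ℝ) < p * s ^ (p-1) := by positivity
    have hφm : 0 < ((s+α) ^ p - p * s ^ (p-1) * (s+α)) - (s ^ p - p * s ^ (p-1) * s) := by
      have := phi_strictMonoOn hp hs.le (self_mem_Ici)
        (by simp only [mem_Ici]; linarith) (by linarith : s < s + α)
      simp only at this
      linarith
    have hφa : 0 < ((s-α) ^ p - p * s ^ (p-1) * (s-α)) - (s ^ p - p * s ^ (p-1) * s) := by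
      have := phi_strictAntiOn hp hs
        (by constructor <;> linarith) (by constructor <;> linarith) (by linarith : s - α < s)
      simp only at this
      linarith
    obtain ⟨φm, hφm_def⟩ : ∃ d : ℝ, d = ((s+α) ^ p - p * s ^ (p-1) * (s+α)) - (s ^ p - p * s ^ (p-1) * s) := ⟨_, rfl⟩
    obtain ⟨φa, hφa_def⟩ : ∃ d : ℝ, d = ((s-α) ^ p - p * s ^ (p-1) * (s-α)) - (s ^ p - p * s ^ (p-1) * s) := ⟨_, rfl⟩
    rw [← hφm_def] at hφm
    rw [← hφa_def] at hφa
    obtain ⟨δ, hδ_def⟩ : ∃ d : ℝ, d = min (min φm φa) (δL * (p * s ^ (p-1)) * (s-α)) / 2 := ⟨_, rfl⟩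
    have hδpos : 0 < δ := by
      rw [hδ_def]
      apply div_pos _ (by norm_num)
      apply lt_min (lt_min hφm hφa)
      have : 0 < s - α := by linarith
      positivity
    have hδφm : δ < φm := by
      have h := min_le_left (min φm φa) (δL * (p * s ^ (p-1)) * (s-α))
      have h' := min_le_left φm φa
      rw [hδ_def]; linarith
    have hδφa : δ < φa := by
      have h := min_le_left (min φm φa) (δL * (p * s ^ (p-1)) * (s-α))
      have h' := min_le_right φm φa
      rw [hδ_def]; linarith
    have hδP : δ ≤ δL * (p * s ^ (p-1)) * (s-α) / 2 := by
      have h := min_le_right (min φm φa) (δL * (p * s ^ (p-1)) * (s-α))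
      rw [hδ_def]; linarith
    refine ⟨δ, hδpos, fun z hz => ?_⟩
    -- split the Bregman distance
    have htang : 0 ≤ (‖z‖ ^ p - p * s ^ (p-1) * ‖z‖) - (s ^ p - p * s ^ (p-1) * s) := by
      have := rpow_tangent hp hs.le (norm_nonneg z)
      nlinarith
    have hjz : 0 ≤ p * s ^ (p-1) * (‖z‖ - j z) := by
      have := hj z
      nlinarith
    have h1 : (‖z‖ ^ p - p * s ^ (p-1) * ‖z‖) - (s ^ p - p * s ^ (p-1) * s) ≤ δ := by
      nlinarith
    have h2 : p * s ^ (p-1) * (‖z‖ - j z) ≤ δ := by nlinarith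
    -- norm of z close to s
    have hb1 : ‖z‖ < s + α := by
      by_contra hcon
      push_neg at hcon
      have := (phi_strictMonoOn hp hs.le).monotoneOn
        (by simp only [mem_Ici]; linarith) (by simp only [mem_Ici]; linarith) hcon
      rw [hφm_def] at hδφm
      linarith
    have hb2 : s - α < ‖z‖ := by
      by_contra hcon
      push_neg at hcon
      have := (phi_strictAntiOn hp hs).antitoneOn
        (by constructor <;> [positivity; linarith])
        (by constructor <;> [linarith; linarith]) hcon
      rw [hφa_def] at hδφa
      linarith
    have hbpos : 0 < ‖z‖ := by linarith
    have hu : ‖(‖z‖⁻¹ • z : X)‖ = 1 := by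
      rw [norm_smul, norm_inv, Real.norm_of_nonneg (norm_nonneg z)]
      field_simp
    -- j u is close to 1
    have hzjz : ‖z‖ - j z ≤ δL * (s - α) / 2 := by
      rw [← mul_le_mul_iff_right₀ hP]
      calc p * s ^ (p-1) * (‖z‖ - j z) ≤ δ := h2
        _ ≤ δL * (p * s ^ (p-1)) * (s-α) / 2 := hδP
        _ = p * s ^ (p-1) * (δL * (s - α) / 2) := by ring
    have hju : 1 - δL / 2 ≤ j (‖z‖⁻¹ • z) := by
      rw [j.map_smul, smul_eq_mul, inv_mul_eq_div, le_div_iff₀ hbpos]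
      have hmm : δL * (s - α) ≤ δL * ‖z‖ := mul_le_mul_of_nonneg_left hb2.le hδL.le
      linarith
    -- LUR: u close to xh
    have hclose : ‖(s⁻¹ • x : X) - ‖z‖⁻¹ • z‖ < ε / (2 * (s + 1)) := by
      by_contra hcon
      push_neg at hcon
      have hLu := hL (‖z‖⁻¹ • z) hu hcon
      have hjxh : j (s⁻¹ • x) = 1 := by
        rw [j.map_smul, smul_eq_mul, hjx]
        exact inv_mul_cancel₀ hs.ne'
      have hsum : 1 + j (‖z‖⁻¹ • z) ≤ ‖(s⁻¹ • x : X) + ‖z‖⁻¹ • z‖ := by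
        calc 1 + j (‖z‖⁻¹ • z) = j ((s⁻¹ • x : X) + ‖z‖⁻¹ • z) := by rw [j.map_add, hjxh]
          _ ≤ ‖(s⁻¹ • x : X) + ‖z‖⁻¹ • z‖ := hj _
      linarith
    -- conclude
    have hzu : ‖z‖ • (‖z‖⁻¹ • z) = z := smul_inv_smul₀ hbpos.ne' z
    have hxxh : s • ((s⁻¹ • x : X)) = x := smul_inv_smul₀ hs.ne' x
    have hkey : z - x = (‖z‖ • (‖z‖⁻¹ • z) - ‖z‖ • (s⁻¹ • x)) + (‖z‖ • (s⁻¹ • x) - s • (s⁻¹ • x)) := by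
      rw [sub_add_sub_cancel, hzu, hxxh]
    rw [show z - x = (‖z‖ • (‖z‖⁻¹ • z) - ‖z‖ • (s⁻¹ • x)) + (‖z‖ • (s⁻¹ • x) - s • (s⁻¹ • x)) from hkey]
    refine le_trans (norm_add_le _ _) ?_
    have hn1 : ‖‖z‖ • (‖z‖⁻¹ • z) - ‖z‖ • (s⁻¹ • x)‖ = ‖z‖ * ‖(s⁻¹ • x : X) - ‖z‖⁻¹ • z‖ := by
      rw [← smul_sub, norm_smul, Real.norm_of_nonneg (norm_nonneg z), norm_sub_rev]
    have hn2 : ‖‖z‖ • (s⁻¹ • x) - s • (s⁻¹ • x)‖ = |‖z‖ - s| * ‖(s⁻¹ • x : X)‖ := by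
      rw [← sub_smul, norm_smul, Real.norm_eq_abs]
    rw [hn1, hn2, hxh, mul_one]
    have hA : ‖z‖ * ‖(s⁻¹ • x : X) - ‖z‖⁻¹ • z‖ ≤ (s+α) * (ε/(2*(s+1))) :=
      mul_le_mul hb1.le hclose.le (norm_nonneg _) (by linarith)
    have habs : |‖z‖ - s| ≤ α := abs_le.2 ⟨by linarith, by linarith⟩
    have h1 : (s + α) * (ε / (2 * (s + 1))) ≤ (s + 1) * (ε / (2 * (s + 1))) :=
      mul_le_mul_of_nonneg_right (by linarith) (by positivity)
    have heq : (s + 1) * (ε / (2 * (s + 1))) = ε / 2 := by field_simp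
    linarith

end geomLemmas

section kpLemma
variable {X : Type*} [NormedAddCommGroup X] [NormedSpace ℝ X] {p : ℝ}

set_option maxHeartbeats 1600000 in
/-- small `Kp`-distance to a fixed `x` forces norm-closeness to `x` (LUR). -/
lemma kp_small
    (hLUR : ∀ x : X, ‖x‖ = 1 → ∀ ε : ℝ, 0 < ε → ∃ δ : ℝ, 0 < δ ∧
      ∀ y : X, ‖y‖ = 1 → ε ≤ ‖x - y‖ → ‖x + y‖ / 2 ≤ 1 - δ)
    (hp : 1 < p) (x : X) :
    ∀ ε : ℝ, 0 < ε → ∃ δ : ℝ, 0 < δ ∧ ∀ y : X, Kp p x y ≤ δ → ‖y - x‖ ≤ ε := by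
  intro ε hε
  have h21 : (1:ℝ) < 2 ^ (p-1) := by
    have := Real.rpow_lt_rpow_of_exponent_lt (by norm_num : (1:ℝ) < 2)
      (by linarith : (0:ℝ) < p - 1)
    simpa using this
  by_cases hx : x = 0
  · refine ⟨(2 ^ (p-1) - 1) * (min ε 1) ^ p, by
      { have : (0:ℝ) < (min ε 1) ^ p := Real.rpow_pos_of_pos (by positivity) p
        nlinarith }, fun y hy => ?_⟩
    subst hx
    simp only [Kp, norm_zero, Real.zero_rpow (by positivity : p ≠ 0), mul_zero,
      zero_add, zero_add] at hy
    have hy2 : (2 ^ (p-1) - 1) * ‖y‖ ^ p ≤ (2 ^ (p-1) - 1) * (min ε 1) ^ p := by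
      nlinarith
    have hy3 : ‖y‖ ^ p ≤ (min ε 1) ^ p := by
      have h0 : (0:ℝ) < 2 ^ (p-1) - 1 := by linarith
      exact le_of_mul_le_mul_left (by linarith) h0
    have : ‖y‖ ≤ min ε 1 := by
      by_contra hcon
      push_neg at hcon
      exact absurd hy3 (not_le.2 (Real.rpow_lt_rpow (by positivity) hcon (by positivity)))
    rw [sub_zero]
    exact le_trans this (min_le_left _ _)
  · have hs : (0:ℝ) < ‖x‖ := norm_pos_iff.2 hx
    obtain ⟨s, hs_def⟩ : ∃ s : ℝ, ‖x‖ = s := ⟨‖x‖, rfl⟩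
    rw [hs_def] at hs
    have hxh : ‖(s⁻¹ • x : X)‖ = 1 := by
      rw [norm_smul, norm_inv, Real.norm_of_nonneg (by linarith), hs_def]
      field_simp
    obtain ⟨δL0, hδL0, hL0⟩ := hLUR (s⁻¹ • x) hxh (ε / (2 * (s + 1))) (by positivity)
    obtain ⟨δL, hδL_def⟩ : ∃ d : ℝ, d = min δL0 1 := ⟨_, rfl⟩
    have hδL : 0 < δL := by rw [hδL_def]; exact lt_min hδL0 one_pos
    have hδL1 : δL ≤ 1 := by rw [hδL_def]; exact min_le_right _ _
    have hL : ∀ y : X, ‖y‖ = 1 → ε / (2 * (s + 1)) ≤ ‖s⁻¹ • x - y‖ →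
        ‖s⁻¹ • x + y‖ / 2 ≤ 1 - δL := by
      intro y h1 h2
      have := hL0 y h1 h2
      have : ‖s⁻¹ • x + y‖ / 2 ≤ 1 - δL0 := this
      have hd : δL ≤ δL0 := by rw [hδL_def]; exact min_le_left _ _
      linarith
    -- the constant c₀
    obtain ⟨c₀, hc₀_def⟩ : ∃ c : ℝ, c = (2 ^ p * s ^ p - (s * (2 - δL)) ^ p) / 2 := ⟨_, rfl⟩
    have hc₀ : 0 < c₀ := by
      rw [hc₀_def]
      have h1 : (s * (2 - δL)) ^ p < (2 * s) ^ p := by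
        apply Real.rpow_lt_rpow (by nlinarith) (by nlinarith) (by linarith)
      rw [Real.mul_rpow (by norm_num) hs.le] at h1
      linarith
    -- choice of α via continuity
    have hGcont : ContinuousAt (fun a : ℝ =>
        2 ^ (p-1) * (s ^ p + (s - a) ^ p) - (s * (2 - δL) + a) ^ p) 0 := by
      apply ContinuousAt.sub
      · apply ContinuousAt.mul continuousAt_const
        apply ContinuousAt.add continuousAt_const
        exact ((cont_rpow hp).comp (continuous_const.sub continuous_id)).continuousAt
      · exact ((cont_rpow hp).comp (continuous_const.add continuous_id)).continuousAt
    have hG0 : (fun a : ℝ =>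
        2 ^ (p-1) * (s ^ p + (s - a) ^ p) - (s * (2 - δL) + a) ^ p) 0 = 2 * c₀ := by
      simp only [sub_zero, add_zero]
      have h2p : (2:ℝ) ^ (p-1) = 2 ^ p / 2 := by
        rw [Real.rpow_sub (by norm_num : (0:ℝ) < 2), Real.rpow_one]
      rw [hc₀_def, h2p]
      ring
    have hev : {a : ℝ | c₀ < 2 ^ (p-1) * (s ^ p + (s - a) ^ p) - (s * (2 - δL) + a) ^ p}
        ∈ nhds (0:ℝ) := by
      have : Set.Ioi c₀ ∈ nhds ((fun a : ℝ =>
          2 ^ (p-1) * (s ^ p + (s - a) ^ p) - (s * (2 - δL) + a) ^ p) 0) := by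
        rw [hG0]
        exact Ioi_mem_nhds (by linarith)
      exact hGcont this
    obtain ⟨r, hr, hball⟩ := Metric.mem_nhds_iff.1 hev
    obtain ⟨α, hα, hα1, hαε, hαs, hαG⟩ : ∃ α : ℝ, 0 < α ∧ α ≤ 1 ∧ α ≤ ε/4 ∧ α ≤ s/2 ∧
        c₀ < 2 ^ (p-1) * (s ^ p + (s - α) ^ p) - (s * (2 - δL) + α) ^ p := by
      refine ⟨min (r/2) (min 1 (min (ε/4) (s/2))), by positivity,
        le_trans (min_le_right _ _) (min_le_left _ _),
        le_trans (min_le_right _ _) (le_trans (min_le_right _ _) (min_le_left _ _)),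
        le_trans (min_le_right _ _) (le_trans (min_le_right _ _) (min_le_right _ _)), ?_⟩
      apply hball
      rw [Metric.mem_ball, Real.dist_eq, sub_zero, abs_of_pos (by positivity)]
      calc min (r/2) (min 1 (min (ε/4) (s/2))) ≤ r/2 := min_le_left _ _
        _ < r := by linarith
    -- the F-values
    have hFs : 2 ^ (p-1) * (s ^ p + s ^ p) - (s + s) ^ p = 0 := by
      have h2p : (2:ℝ) ^ (p-1) = 2 ^ p / 2 := by
        rw [Real.rpow_sub (by norm_num : (0:ℝ) < 2), Real.rpow_one]
      have hms : (s + s) ^ p = 2 ^ p * s ^ p := by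
        rw [show s + s = 2 * s by ring, Real.mul_rpow (by norm_num) hs.le]
      rw [hms, h2p]; ring
    have hFm : 0 < 2 ^ (p-1) * (s ^ p + (s+α) ^ p) - (s + (s+α)) ^ p := by
      have := F_strictMonoOn hp hs.le (self_mem_Ici)
        (by simp only [Set.mem_Ici]; linarith) (by linarith : s < s + α)
      simp only at this
      linarith
    have hFa : 0 < 2 ^ (p-1) * (s ^ p + (s-α) ^ p) - (s + (s-α)) ^ p := by
      have := F_strictAntiOn hp hs
        (by constructor <;> linarith) (by constructor <;> linarith) (by linarith : s - α < s)
      simp only at this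
      linarith
    obtain ⟨Fm, hFm_def⟩ : ∃ d : ℝ, d = 2 ^ (p-1) * (s ^ p + (s+α) ^ p) - (s + (s+α)) ^ p :=
      ⟨_, rfl⟩
    obtain ⟨Fa, hFa_def⟩ : ∃ d : ℝ, d = 2 ^ (p-1) * (s ^ p + (s-α) ^ p) - (s + (s-α)) ^ p :=
      ⟨_, rfl⟩
    rw [← hFm_def] at hFm
    rw [← hFa_def] at hFa
    obtain ⟨δ, hδ_def⟩ : ∃ d : ℝ, d = min (min Fm Fa) c₀ / 2 := ⟨_, rfl⟩
    have hδpos : 0 < δ := by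
      rw [hδ_def]
      exact div_pos (lt_min (lt_min hFm hFa) hc₀) (by norm_num)
    have hδFm : δ < Fm := by
      have h := min_le_left (min Fm Fa) c₀
      have h' := min_le_left Fm Fa
      rw [hδ_def]; linarith
    have hδFa : δ < Fa := by
      have h := min_le_left (min Fm Fa) c₀
      have h' := min_le_right Fm Fa
      rw [hδ_def]; linarith
    have hδc : δ < c₀ := by
      have h := min_le_right (min Fm Fa) c₀
      rw [hδ_def]; linarith
    refine ⟨δ, hδpos, fun y hy => ?_⟩
    simp only [Kp, hs_def] at hy
    -- bound the norm of y
    have hxy : ‖x + y‖ ^ p ≤ (s + ‖y‖) ^ p := by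
      apply Real.rpow_le_rpow (norm_nonneg _) _ (by positivity)
      rw [← hs_def]; exact norm_add_le x y
    have hFy : 2 ^ (p-1) * (s ^ p + ‖y‖ ^ p) - (s + ‖y‖) ^ p ≤ δ := by linarith
    have hb1 : ‖y‖ < s + α := by
      by_contra hcon
      push_neg at hcon
      have := (F_strictMonoOn hp hs.le).monotoneOn
        (by simp only [Set.mem_Ici]; linarith) (by simp only [Set.mem_Ici]; linarith) hcon
      rw [hFm_def] at hδFm
      linarith
    have hb2 : s - α < ‖y‖ := by
      by_contra hcon
      push_neg at hcon
      have := (F_strictAntiOn hp hs).antitoneOn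
        (by constructor <;> [positivity; linarith])
        (by constructor <;> [linarith; linarith]) hcon
      rw [hFa_def] at hδFa
      linarith
    have hbpos : 0 < ‖y‖ := by linarith
    -- lower bound for ‖x + y‖
    have hxylow : s * (2 - δL) + α ≤ ‖x + y‖ := by
      have hmono : (s - α) ^ p ≤ ‖y‖ ^ p :=
        Real.rpow_le_rpow (by linarith) hb2.le (by positivity)
      have h1 : (s * (2 - δL) + α) ^ p ≤ ‖x + y‖ ^ p := by nlinarith
      by_contra hcon
      push_neg at hcon
      have := Real.rpow_lt_rpow (norm_nonneg _) hcon (by positivity)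
      linarith
    -- unit vectors
    have hyh : ‖(‖y‖⁻¹ • y : X)‖ = 1 := by
      rw [norm_smul, norm_inv, Real.norm_of_nonneg (norm_nonneg y)]
      field_simp
    have hdecomp : (s⁻¹ • x + ‖y‖⁻¹ • y : X) = s⁻¹ • (x + y) + (‖y‖⁻¹ - s⁻¹) • y := by
      rw [smul_add, sub_smul]
      abel
    have htri : ‖(s⁻¹ • (x+y) : X)‖ - ‖((‖y‖⁻¹ - s⁻¹) • y : X)‖ ≤ ‖(s⁻¹ • x + ‖y‖⁻¹ • y : X)‖ := by
      have h := norm_sub_norm_le (s⁻¹ • (x+y) : X) (-((‖y‖⁻¹ - s⁻¹) • y))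
      rw [norm_neg, sub_neg_eq_add, ← hdecomp] at h
      exact h
    have hn1 : ‖(s⁻¹ • (x+y) : X)‖ = s⁻¹ * ‖x + y‖ := by
      rw [norm_smul, norm_inv, Real.norm_of_nonneg hs.le]
    have hn2 : ‖((‖y‖⁻¹ - s⁻¹) • y : X)‖ ≤ α / s := by
      rw [norm_smul, Real.norm_eq_abs]
      have heq : ‖y‖⁻¹ - s⁻¹ = (s - ‖y‖) / (‖y‖ * s) := by field_simp
      rw [heq, abs_div, abs_of_pos (by positivity : (0:ℝ) < ‖y‖ * s)]
      rw [div_mul_eq_mul_div, div_le_div_iff₀ (by positivity) hs]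
      have habs : |s - ‖y‖| ≤ α := abs_le.2 ⟨by linarith, by linarith⟩
      have hmul : |s - ‖y‖| * (‖y‖ * s) ≤ α * (‖y‖ * s) :=
        mul_le_mul_of_nonneg_right habs (by positivity)
      nlinarith [hmul]
    rw [hn1] at htri
    have h5 : s⁻¹ * (s * (2 - δL) + α) = (2 - δL) + α / s := by field_simp
    have h6 : s⁻¹ * (s * (2 - δL) + α) ≤ s⁻¹ * ‖x + y‖ :=
      mul_le_mul_of_nonneg_left hxylow (by positivity)
    have hsum : 2 - δL ≤ ‖(s⁻¹ • x + ‖y‖⁻¹ • y : X)‖ := by linarith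
    have hclose : ‖(s⁻¹ • x : X) - ‖y‖⁻¹ • y‖ < ε / (2 * (s + 1)) := by
      by_contra hcon
      push_neg at hcon
      have := hL (‖y‖⁻¹ • y) hyh hcon
      linarith
    -- conclude
    have hzu : ‖y‖ • (‖y‖⁻¹ • y) = y := smul_inv_smul₀ hbpos.ne' y
    have hxxh : s • ((s⁻¹ • x : X)) = x := smul_inv_smul₀ hs.ne' x
    have hkey : y - x = (‖y‖ • (‖y‖⁻¹ • y) - ‖y‖ • (s⁻¹ • x)) + (‖y‖ • (s⁻¹ • x) - s • (s⁻¹ • x)) := by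
      rw [sub_add_sub_cancel, hzu, hxxh]
    rw [show y - x = (‖y‖ • (‖y‖⁻¹ • y) - ‖y‖ • (s⁻¹ • x)) + (‖y‖ • (s⁻¹ • x) - s • (s⁻¹ • x)) from hkey]
    refine le_trans (norm_add_le _ _) ?_
    have hm1 : ‖‖y‖ • (‖y‖⁻¹ • y) - ‖y‖ • (s⁻¹ • x)‖ = ‖y‖ * ‖(s⁻¹ • x : X) - ‖y‖⁻¹ • y‖ := by
      rw [← smul_sub, norm_smul, Real.norm_of_nonneg (norm_nonneg y), norm_sub_rev]
    have hm2 : ‖‖y‖ • (s⁻¹ • x) - s • (s⁻¹ • x)‖ = |‖y‖ - s| * ‖(s⁻¹ • x : X)‖ := by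
      rw [← sub_smul, norm_smul, Real.norm_eq_abs]
    rw [hm1, hm2, hxh, mul_one]
    have hA : ‖y‖ * ‖(s⁻¹ • x : X) - ‖y‖⁻¹ • y‖ ≤ (s+α) * (ε/(2*(s+1))) :=
      mul_le_mul hb1.le hclose.le (norm_nonneg _) (by linarith)
    have habs : |‖y‖ - s| ≤ α := abs_le.2 ⟨by linarith, by linarith⟩
    have h1 : (s + α) * (ε / (2 * (s + 1))) ≤ (s + 1) * (ε / (2 * (s + 1))) :=
      mul_le_mul_of_nonneg_right (by linarith) (by positivity)
    have heq2 : (s + 1) * (ε / (2 * (s + 1))) = ε / 2 := by field_simp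
    linarith

end kpLemma

section coercive
variable {X : Type*} [NormedAddCommGroup X] {p : ℝ}

lemma kp_coercive (hp : 1 < p) {A : ℝ} (hA : 0 < A) :
    ∃ R : ℝ, 0 < R ∧ ∀ z y : X, ‖z‖ ≤ A → Kp p z y ≤ 1 → ‖y‖ ≤ R := by
  have hp0 : (0:ℝ) < p := by linarith
  obtain ⟨τ, hτ_def⟩ : ∃ t : ℝ, t = 2 ^ ((p-1)/p) := ⟨_, rfl⟩
  have hτ : (1:ℝ) < τ := by
    rw [hτ_def]
    have := Real.rpow_lt_rpow_of_exponent_lt (by norm_num : (1:ℝ) < 2)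
      (div_pos (by linarith : (0:ℝ) < p - 1) hp0)
    simpa using this
  have hτp : τ ^ p = 2 ^ (p-1) := by
    rw [hτ_def, ← Real.rpow_mul (by norm_num : (0:ℝ) ≤ 2)]
    congr 1
    field_simp
  have he0 : ((1+τ)/2) ^ p < 2 ^ (p-1) := by
    rw [← hτp]
    exact Real.rpow_lt_rpow (by linarith) (by linarith) hp0
  obtain ⟨e, he_def⟩ : ∃ d : ℝ, d = 2 ^ (p-1) - ((1+τ)/2) ^ p := ⟨_, rfl⟩
  have he : 0 < e := by rw [he_def]; linarith
  refine ⟨max (2*A/(τ-1)) (e⁻¹ ^ (1/p)) + 1, by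
    { have h1 : (0:ℝ) < 2*A/(τ-1) := by
        apply div_pos (by linarith) (by linarith)
      have h2 := le_max_left (2*A/(τ-1)) (e⁻¹ ^ (1/p))
      linarith }, fun z y hz hK => ?_⟩
  by_contra hcon
  push_neg at hcon
  have hb0 : 0 < ‖y‖ := by
    have h1 : (0:ℝ) < 2*A/(τ-1) := div_pos (by linarith) (by linarith)
    have h2 := le_max_left (2*A/(τ-1)) (e⁻¹ ^ (1/p))
    linarith
  have hb1 : 2*A/(τ-1) < ‖y‖ := by
    have h2 := le_max_left (2*A/(τ-1)) (e⁻¹ ^ (1/p))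
    linarith
  have hb2 : e⁻¹ ^ (1/p) < ‖y‖ := by
    have h2 := le_max_right (2*A/(τ-1)) (e⁻¹ ^ (1/p))
    linarith
  have hAb : A + ‖y‖ ≤ (1+τ)/2 * ‖y‖ := by
    rw [div_lt_iff₀ (by linarith : (0:ℝ) < τ - 1)] at hb1
    nlinarith
  have h2 : ‖z + y‖ ^ p ≤ ((1+τ)/2) ^ p * ‖y‖ ^ p := by
    rw [← Real.mul_rpow (by linarith) (norm_nonneg y)]
    apply Real.rpow_le_rpow (norm_nonneg _) _ hp0.le
    calc ‖z + y‖ ≤ ‖z‖ + ‖y‖ := norm_add_le _ _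
      _ ≤ A + ‖y‖ := by linarith
      _ ≤ (1+τ)/2 * ‖y‖ := hAb
  have h3 : e * ‖y‖ ^ p ≤ Kp p z y := by
    simp only [Kp]
    have hzp : 0 ≤ 2 ^ (p-1) * ‖z‖ ^ p := by positivity
    rw [he_def]
    nlinarith
  have h4 : 1 < e * ‖y‖ ^ p := by
    have hip : (e⁻¹ ^ (1/p)) ^ p = e⁻¹ := by
      rw [← Real.rpow_mul (by positivity : (0:ℝ) ≤ e⁻¹)]
      rw [show 1/p * p = 1 by field_simp, Real.rpow_one]
    have := Real.rpow_lt_rpow (by positivity) hb2 hp0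
    rw [hip] at this
    calc 1 = e * e⁻¹ := by field_simp
      _ < e * ‖y‖ ^ p := by exact mul_lt_mul_of_pos_left this he
  linarith

end coercive

section envelope
variable {X : Type*} [NormedAddCommGroup X] [NormedSpace ℝ X] {p : ℝ}

lemma mem_convEnv_set (h : X → ℝ) (x : X) :
    h x ∈ { r : ℝ | ∃ (m : ℕ) (l : Fin m → ℝ) (z : Fin m → X),
      (∀ i, 0 < l i) ∧ ∑ i, l i = 1 ∧ ∑ i, l i • z i = x ∧ ∑ i, l i * h (z i) = r } := by
  exact ⟨1, fun _ => 1, fun _ => x, fun _ => one_pos, by simp, by simp, by simp⟩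

lemma convEnv_set_lb (hp : 1 < p) (h : X → ℝ) {c C : ℝ} (hC : 0 ≤ C)
    (hlb : ∀ z, c + C * ‖z‖ ^ p ≤ h z) (x : X) :
    ∀ r ∈ { r : ℝ | ∃ (m : ℕ) (l : Fin m → ℝ) (z : Fin m → X),
      (∀ i, 0 < l i) ∧ ∑ i, l i = 1 ∧ ∑ i, l i • z i = x ∧ ∑ i, l i * h (z i) = r },
      c + C * ‖x‖ ^ p ≤ r := by
  rintro r ⟨m, l, z, hl, hl1, hzx, rfl⟩
  have hnorm : ‖x‖ ≤ ∑ i, l i * ‖z i‖ := by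
    rw [← hzx]
    refine le_trans (norm_sum_le _ _) (le_of_eq ?_)
    exact Finset.sum_congr rfl fun i _ => by
      rw [norm_smul, Real.norm_of_nonneg (hl i).le]
  have hjensen : (∑ i, l i * ‖z i‖) ^ p ≤ ∑ i, l i * ‖z i‖ ^ p := by
    have := (convexOn_rpow hp.le).map_sum_le (t := Finset.univ) (w := l)
      (p := fun i => ‖z i‖) (fun i _ => (hl i).le) hl1 (fun i _ => norm_nonneg _)
    simpa [smul_eq_mul] using this
  have hxp : ‖x‖ ^ p ≤ ∑ i, l i * ‖z i‖ ^ p :=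
    le_trans (Real.rpow_le_rpow (norm_nonneg x) hnorm (by positivity)) hjensen
  have hsplit : ∑ i, l i * (c + C * ‖z i‖ ^ p)
      = c * ∑ i, l i + C * ∑ i, l i * ‖z i‖ ^ p := by
    rw [Finset.mul_sum, Finset.mul_sum, ← Finset.sum_add_distrib]
    exact Finset.sum_congr rfl fun i _ => by ring
  calc c + C * ‖x‖ ^ p ≤ c + C * ∑ i, l i * ‖z i‖ ^ p := by
        exact add_le_add_right (mul_le_mul_of_nonneg_left hxp hC) c
    _ = ∑ i, l i * (c + C * ‖z i‖ ^ p) := by rw [hsplit, hl1, mul_one]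
    _ ≤ ∑ i, l i * h (z i) :=
        Finset.sum_le_sum fun i _ => mul_le_mul_of_nonneg_left (hlb (z i)) (hl i).le

lemma convEnv_lower (hp : 1 < p) (h : X → ℝ) {c C : ℝ} (hC : 0 ≤ C)
    (hlb : ∀ z, c + C * ‖z‖ ^ p ≤ h z) (x : X) :
    c + C * ‖x‖ ^ p ≤ convEnv h x :=
  le_csInf ⟨h x, mem_convEnv_set h x⟩ (convEnv_set_lb hp h hC hlb x)

lemma convEnv_le_self (hp : 1 < p) (h : X → ℝ) {c C : ℝ} (hC : 0 ≤ C)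
    (hlb : ∀ z, c + C * ‖z‖ ^ p ≤ h z) (x : X) :
    convEnv h x ≤ h x :=
  csInf_le ⟨c + C * ‖x‖ ^ p, fun r hr => convEnv_set_lb hp h hC hlb x r hr⟩
    (mem_convEnv_set h x)

end envelope

section erealFacts
variable {X : Type*} [NormedAddCommGroup X] [NormedSpace ℝ X] {p : ℝ}
variable {f : X → EReal} {n : ℕ}

lemma mu_ne_bot {m : ℝ} (hm : ∀ x, (m : EReal) ≤ f x) [Nonempty X] : (⨅ z, f z) ≠ ⊥ :=
  ne_of_gt (lt_of_lt_of_le (EReal.bot_lt_coe m) (le_iInf hm))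

lemma mu_ne_top {x₀ : X} (hx₀ : f x₀ ≠ ⊤) : (⨅ z, f z) ≠ ⊤ :=
  ne_of_lt (lt_of_le_of_lt (iInf_le f x₀) (lt_top_iff_ne_top.2 hx₀))

lemma I_ge (hp : 1 < p) (x : X) :
    (⨅ z, f z) ≤ ⨅ y, f y + (((n : ℝ) * Kp p x y : ℝ) : EReal) :=
  le_iInf fun y => le_trans (iInf_le f y)
    (le_add_of_nonneg_right (EReal.coe_nonneg.2
      (mul_nonneg (Nat.cast_nonneg n) (Kp_nonneg hp x y))))

lemma I_le_self (hp : 1 < p) (x : X) :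
    (⨅ y, f y + (((n : ℝ) * Kp p x y : ℝ) : EReal)) ≤ f x := by
  refine le_trans (iInf_le _ x) ?_
  rw [Kp_self hp x, mul_zero, EReal.coe_zero, add_zero]

lemma I_ne_top (hp : 1 < p) {x₀ : X} (hx₀ : f x₀ ≠ ⊤) (x : X) :
    (⨅ y, f y + (((n : ℝ) * Kp p x y : ℝ) : EReal)) ≠ ⊤ := by
  refine ne_of_lt (lt_of_le_of_lt (iInf_le _ x₀) ?_)
  exact EReal.add_lt_top hx₀ (EReal.coe_ne_top _)

lemma I_ne_bot (hp : 1 < p) {m : ℝ} (hm : ∀ x, (m : EReal) ≤ f x) [Nonempty X] (x : X) :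
    (⨅ y, f y + (((n : ℝ) * Kp p x y : ℝ) : EReal)) ≠ ⊥ :=
  ne_of_gt (lt_of_lt_of_le (lt_of_lt_of_le (EReal.bot_lt_coe m) (le_iInf hm)) (I_ge hp x))

lemma g_lower (hp : 1 < p) {m : ℝ} (hm : ∀ x, (m : EReal) ≤ f x) {x₀ : X} (hx₀ : f x₀ ≠ ⊤)
    (x : X) :
    (⨅ z, f z).toReal + 2 ^ (p-1) * (n : ℝ) * ‖x‖ ^ p ≤ gnp p f n x := by
  have : Nonempty X := ⟨x₀⟩
  unfold gnp
  have h1 : (⨅ z, f z).toReal ≤ (⨅ y, f y + (((n : ℝ) * Kp p x y : ℝ) : EReal)).toReal :=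
    EReal.toReal_le_toReal (I_ge hp x) (mu_ne_bot hm) (I_ne_top hp hx₀ x)
  linarith

lemma g_upper (hp : 1 < p) {m : ℝ} (hm : ∀ x, (m : EReal) ≤ f x)
    (x : X) (hfx : f x ≠ ⊤) :
    gnp p f n x ≤ (f x).toReal + 2 ^ (p-1) * (n : ℝ) * ‖x‖ ^ p := by
  have : Nonempty X := ⟨x⟩
  unfold gnp
  have h1 : (⨅ y, f y + (((n : ℝ) * Kp p x y : ℝ) : EReal)).toReal ≤ (f x).toReal :=
    EReal.toReal_le_toReal (I_le_self hp x) (I_ne_bot hp hm x) hfx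
  linarith

end erealFacts

section mainHard
variable {X : Type*} [NormedAddCommGroup X] [NormedSpace ℝ X] {p : ℝ}

set_option maxHeartbeats 4000000 in
lemma main_hard
    (hLUR : ∀ x : X, ‖x‖ = 1 → ∀ ε : ℝ, 0 < ε → ∃ δ : ℝ, 0 < δ ∧
      ∀ y : X, ‖y‖ = 1 → ε ≤ ‖x - y‖ → ‖x + y‖ / 2 ≤ 1 - δ)
    (hp : 1 < p) (f : X → EReal) (hlsc : LowerSemicontinuous f)
    {m0 : ℝ} (hm : ∀ x, (m0 : EReal) ≤ f x) {x₀ : X} (hx₀ : f x₀ ≠ ⊤)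
    (n : ℕ) (hn : 0 < n) (x : X)
    (hDx : convEnv (gnp p f n) x
      = (⨅ z, f z).toReal + 2 ^ (p-1) * (n : ℝ) * ‖x‖ ^ p) :
    f x ≤ ⨅ z, f z := by
  have hne : Nonempty X := ⟨x₀⟩
  by_contra hcon
  push_neg at hcon
  have hμbot : (⨅ z, f z) ≠ ⊥ := mu_ne_bot hm
  have hμtop : (⨅ z, f z) ≠ ⊤ := mu_ne_top hx₀
  obtain ⟨c', hc1, hc2⟩ := exists_between hcon
  have hc'top : c' ≠ ⊤ := hc2.ne_top
  have hc'bot : c' ≠ ⊥ := (lt_of_le_of_lt bot_le hc1).ne'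
  have hcoe : ((c'.toReal : ℝ) : EReal) = c' := EReal.coe_toReal hc'top hc'bot
  obtain ⟨c, hc_def⟩ : ∃ c : ℝ, c = c'.toReal := ⟨_, rfl⟩
  rw [← hc_def] at hcoe
  have hev := hlsc x c' hc2
  rw [Metric.eventually_nhds_iff] at hev
  obtain ⟨r, hr, hball⟩ := hev
  have hMc : (⨅ z, f z).toReal < c := by
    have h1 : (⨅ z, f z) < (c : EReal) := by rw [hcoe]; exact hc1
    rw [← EReal.coe_toReal hμtop hμbot, EReal.coe_lt_coe_iff] at h1
    exact h1
  -- dual functional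
  obtain ⟨j, hj, hjx⟩ : ∃ j : X →L[ℝ] ℝ, (∀ z, j z ≤ ‖z‖) ∧ j x = ‖x‖ := by
    by_cases hx0 : x = 0
    · exact ⟨0, fun z => by simpa using norm_nonneg z, by simp [hx0]⟩
    · obtain ⟨g, hg1, hg2⟩ := exists_dual_vector ℝ x (norm_ne_zero_iff.2 hx0)
      refine ⟨g, fun z => ?_, by exact_mod_cast hg2⟩
      calc g z ≤ |g z| := le_abs_self _
        _ = ‖g z‖ := (Real.norm_eq_abs _).symm
        _ ≤ ‖g‖ * ‖z‖ := g.le_opNorm z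
        _ = ‖z‖ := by rw [hg1, one_mul]
  -- geometric data
  obtain ⟨δ₁, hδ₁, hK1⟩ := kp_small hLUR hp x (r/2) (by linarith)
  obtain ⟨R, hR, hRb⟩ := kp_coercive (X := X) hp (show (0:ℝ) < ‖x‖ + 1 by positivity)
  obtain ⟨ε₁, hε₁, hε₁1, hε₁d⟩ : ∃ e : ℝ, 0 < e ∧ e ≤ 1 ∧
      e * (2 ^ (p-1) * (p * (‖x‖+1) ^ (p-1)) + p * ((‖x‖+1) + R) ^ (p-1)) ≤ δ₁/2 := by
    obtain ⟨D, hD_def⟩ : ∃ d : ℝ,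
        d = 2 ^ (p-1) * (p * (‖x‖+1) ^ (p-1)) + p * ((‖x‖+1) + R) ^ (p-1) := ⟨_, rfl⟩
    have hD : 0 < D := by rw [hD_def]; positivity
    refine ⟨min 1 (δ₁/(2*D)), by positivity, min_le_left _ _, ?_⟩
    rw [← hD_def]
    calc (min 1 (δ₁/(2*D))) * D ≤ (δ₁/(2*D)) * D :=
          mul_le_mul_of_nonneg_right (min_le_right _ _) hD.le
      _ = δ₁/2 := by field_simp
  obtain ⟨δ₂, hδ₂, hB2⟩ := breg_small hLUR hp x j hj hjx ε₁ hε₁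
  have hnpos : (0:ℝ) < (n:ℝ) := Nat.cast_pos.2 hn
  have hC : (0:ℝ) < 2 ^ (p-1) * (n:ℝ) := by positivity
  obtain ⟨η, hη_def⟩ : ∃ e : ℝ, e = min (2 ^ (p-1) * (n:ℝ) * δ₂/2)
      (min ((n:ℝ)/2) (min ((n:ℝ)*δ₁/8) ((c - (⨅ z, f z).toReal)/2))) := ⟨_, rfl⟩
  have hη : 0 < η := by
    rw [hη_def]
    apply lt_min (by positivity)
    apply lt_min (by positivity)
    apply lt_min (by positivity)
    linarith
  have hη1 : η ≤ 2 ^ (p-1) * (n:ℝ) * δ₂/2 := hη_def ▸ min_le_left _ _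
  have hη2 : η ≤ (n:ℝ)/2 := hη_def ▸ le_trans (min_le_right _ _) (min_le_left _ _)
  have hη3 : η ≤ (n:ℝ)*δ₁/8 := hη_def ▸ le_trans (min_le_right _ _)
    (le_trans (min_le_right _ _) (min_le_left _ _))
  have hη4 : η ≤ (c - (⨅ z, f z).toReal)/2 := hη_def ▸ le_trans (min_le_right _ _)
    (le_trans (min_le_right _ _) (min_le_right _ _))
  -- extract a convex combination
  have hlt : convEnv (gnp p f n) x
      < ((⨅ z, f z).toReal + 2 ^ (p-1) * (n:ℝ) * ‖x‖ ^ p) + η := by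
    rw [hDx]; linarith
  have hSne : Set.Nonempty { r : ℝ | ∃ (m : ℕ) (l : Fin m → ℝ) (z : Fin m → X),
      (∀ i, 0 < l i) ∧ ∑ i, l i = 1 ∧ ∑ i, l i • z i = x ∧
      ∑ i, l i * gnp p f n (z i) = r } := ⟨gnp p f n x, mem_convEnv_set _ x⟩
  rw [convEnv] at hlt
  obtain ⟨rv, hrvS, hrv⟩ := exists_lt_of_csInf_lt hSne hlt
  obtain ⟨mm, l, z, hl, hl1, hzx, hrval⟩ := hrvS
  rw [← hrval] at hrv
  -- pointwise lower bounds
  have hglb : ∀ i, (⨅ z, f z).toReal + 2 ^ (p-1) * (n:ℝ) * ‖z i‖ ^ p ≤ gnp p f n (z i) :=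
    fun i => g_lower hp hm hx₀ (z i)
  have hBnn : ∀ i, 0 ≤ ‖z i‖ ^ p - ‖x‖ ^ p - p * ‖x‖ ^ (p-1) * (j (z i) - ‖x‖) := by
    intro i
    have h1 := rpow_tangent hp (norm_nonneg x) (norm_nonneg (z i))
    have h3 : 0 ≤ p * ‖x‖ ^ (p-1) * (‖z i‖ - j (z i)) :=
      mul_nonneg (by positivity) (by linarith [hj (z i)])
    nlinarith
  -- sum identity for j
  have hsum_j : ∑ i, l i * j (z i) = ‖x‖ := by
    have h := map_sum j (fun i => l i • z i) Finset.univ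
    rw [hzx] at h
    simp only [j.map_smul, smul_eq_mul] at h
    rw [← hjx]
    exact h.symm
  -- the key small sum
  have hkey : ∑ i, l i * ((gnp p f n (z i) - (⨅ z, f z).toReal
        - 2 ^ (p-1) * (n:ℝ) * ‖z i‖ ^ p)
      + 2 ^ (p-1) * (n:ℝ) * (‖z i‖ ^ p - ‖x‖ ^ p - p * ‖x‖ ^ (p-1) * (j (z i) - ‖x‖)))
      < η := by
    have h1 : ∀ i, l i * ((gnp p f n (z i) - (⨅ z, f z).toReal
          - 2 ^ (p-1) * (n:ℝ) * ‖z i‖ ^ p)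
        + 2 ^ (p-1) * (n:ℝ) * (‖z i‖ ^ p - ‖x‖ ^ p - p * ‖x‖ ^ (p-1) * (j (z i) - ‖x‖)))
        = l i * gnp p f n (z i)
          - ((⨅ z, f z).toReal + 2 ^ (p-1) * (n:ℝ) * ‖x‖ ^ p
              - 2 ^ (p-1) * (n:ℝ) * (p * ‖x‖ ^ (p-1)) * ‖x‖) * l i
          - (2 ^ (p-1) * (n:ℝ) * (p * ‖x‖ ^ (p-1))) * (l i * j (z i)) := fun i => by ring
    rw [Finset.sum_congr rfl fun i _ => h1 i]
    rw [Finset.sum_sub_distrib, Finset.sum_sub_distrib, ← Finset.mul_sum, ← Finset.mul_sum,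
      hl1, hsum_j]
    ring_nf
    ring_nf at hrv
    linarith
  -- selection of a good index
  have hnn : ∀ i, 0 ≤ (gnp p f n (z i) - (⨅ z, f z).toReal
        - 2 ^ (p-1) * (n:ℝ) * ‖z i‖ ^ p)
      + 2 ^ (p-1) * (n:ℝ) * (‖z i‖ ^ p - ‖x‖ ^ p - p * ‖x‖ ^ (p-1) * (j (z i) - ‖x‖)) := by
    intro i
    have h1 := hglb i
    have h2 := hBnn i
    nlinarith
  have hsel : ∃ i, (gnp p f n (z i) - (⨅ z, f z).toReal
        - 2 ^ (p-1) * (n:ℝ) * ‖z i‖ ^ p)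
      + 2 ^ (p-1) * (n:ℝ) * (‖z i‖ ^ p - ‖x‖ ^ p - p * ‖x‖ ^ (p-1) * (j (z i) - ‖x‖))
      < 2*η := by
    by_contra hns
    push_neg at hns
    have hge : ∑ i, l i * (2*η) ≤ ∑ i, l i * ((gnp p f n (z i) - (⨅ z, f z).toReal
          - 2 ^ (p-1) * (n:ℝ) * ‖z i‖ ^ p)
        + 2 ^ (p-1) * (n:ℝ) * (‖z i‖ ^ p - ‖x‖ ^ p - p * ‖x‖ ^ (p-1) * (j (z i) - ‖x‖)))
        := Finset.sum_le_sum fun i _ => mul_le_mul_of_nonneg_left (hns i) (hl i).le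
    rw [← Finset.sum_mul, hl1, one_mul] at hge
    linarith
  obtain ⟨i, hi⟩ := hsel
  have hEnn : 0 ≤ gnp p f n (z i) - (⨅ z, f z).toReal - 2 ^ (p-1) * (n:ℝ) * ‖z i‖ ^ p := by
    have := hglb i; linarith
  have hBnn_i := hBnn i
  -- z i is close to x
  have hBi : ‖z i‖ ^ p - ‖x‖ ^ p - p * ‖x‖ ^ (p-1) * (j (z i) - ‖x‖) ≤ δ₂ := by
    have h1 : 2 ^ (p-1) * (n:ℝ) * (‖z i‖ ^ p - ‖x‖ ^ p - p * ‖x‖ ^ (p-1) * (j (z i) - ‖x‖))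
        < 2*η := by linarith
    have h2 : 2 ^ (p-1) * (n:ℝ) * (‖z i‖ ^ p - ‖x‖ ^ p - p * ‖x‖ ^ (p-1) * (j (z i) - ‖x‖))
        ≤ 2 ^ (p-1) * (n:ℝ) * δ₂ := by linarith
    exact le_of_mul_le_mul_left h2 hC
  have hzix : ‖z i - x‖ ≤ ε₁ := hB2 (z i) hBi
  -- the infimum at z i is small : extract y
  have hItop := I_ne_top (f := f) (n := n) hp hx₀ (z i)
  have hIbot := I_ne_bot (f := f) (n := n) hp hm (z i)
  have hEi : (⨅ y, f y + (((n : ℝ) * Kp p (z i) y : ℝ) : EReal)).toReal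
      < (⨅ z, f z).toReal + 2*η := by
    have hgnpzi : gnp p f n (z i)
        = (⨅ y, f y + (((n : ℝ) * Kp p (z i) y : ℝ) : EReal)).toReal
          + 2 ^ (p-1) * (n:ℝ) * ‖z i‖ ^ p := rfl
    nlinarith [hi, hBnn_i, hC]
  have hIlt : (⨅ y, f y + (((n : ℝ) * Kp p (z i) y : ℝ) : EReal))
      < (((⨅ z, f z).toReal + 2*η : ℝ) : EReal) := by
    rw [← EReal.coe_toReal hItop hIbot, EReal.coe_lt_coe_iff]
    exact hEi
  rw [iInf_lt_iff] at hIlt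
  obtain ⟨y, hy⟩ := hIlt
  -- dissect
  have hfytop : f y ≠ ⊤ := by
    intro h
    rw [h] at hy
    rw [EReal.top_add_coe] at hy
    exact absurd hy (not_lt.2 le_top)
  have hfybot : f y ≠ ⊥ := ne_of_gt (lt_of_lt_of_le (EReal.bot_lt_coe m0) (hm y))
  rw [← EReal.coe_toReal hfytop hfybot, ← EReal.coe_add, EReal.coe_lt_coe_iff] at hy
  have hfyμ : (⨅ z, f z).toReal ≤ (f y).toReal :=
    EReal.toReal_le_toReal (iInf_le f y) hμbot hfytop
  have hKnn : 0 ≤ (n:ℝ) * Kp p (z i) y :=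
    mul_nonneg (Nat.cast_nonneg n) (Kp_nonneg hp (z i) y)
  have hfy_small : (f y).toReal < c := by linarith
  have hKzy : Kp p (z i) y < 2*η/(n:ℝ) := by
    rw [lt_div_iff₀ hnpos]
    nlinarith
  -- bounds for the transfer
  have hzA : ‖z i‖ ≤ ‖x‖ + 1 := by
    calc ‖z i‖ = ‖x + (z i - x)‖ := by rw [add_sub_cancel]
      _ ≤ ‖x‖ + ‖z i - x‖ := norm_add_le _ _
      _ ≤ ‖x‖ + 1 := by linarith
  have hK1' : Kp p (z i) y ≤ 1 := by
    have h1 : 2*η/(n:ℝ) ≤ 1 := by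
      rw [div_le_one hnpos]; linarith
    linarith
  have hyR : ‖y‖ ≤ R := hRb (z i) y hzA hK1'
  -- transfer of Kp from z i to x
  have hKxy : Kp p x y ≤ δ₁ := by
    have hd1 : |‖x‖ ^ p - ‖z i‖ ^ p| ≤ p * (‖x‖+1) ^ (p-1) * ε₁ := by
      have h := rpow_lip hp (norm_nonneg x) (norm_nonneg (z i))
        (by linarith : ‖x‖ ≤ ‖x‖ + 1) hzA
      have habs : |‖x‖ - ‖z i‖| ≤ ε₁ := by
        refine le_trans (abs_norm_sub_norm_le x (z i)) ?_
        rw [norm_sub_rev]; exact hzix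
      calc |‖x‖ ^ p - ‖z i‖ ^ p| ≤ p * (‖x‖+1) ^ (p-1) * |‖x‖ - ‖z i‖| := h
        _ ≤ p * (‖x‖+1) ^ (p-1) * ε₁ := by
            apply mul_le_mul_of_nonneg_left habs (by positivity)
    have hd2 : |‖z i + y‖ ^ p - ‖x + y‖ ^ p| ≤ p * ((‖x‖+1) + R) ^ (p-1) * ε₁ := by
      have hb1 : ‖z i + y‖ ≤ (‖x‖+1) + R := by
        calc ‖z i + y‖ ≤ ‖z i‖ + ‖y‖ := norm_add_le _ _
          _ ≤ (‖x‖+1) + R := add_le_add hzA hyR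
      have hb2 : ‖x + y‖ ≤ (‖x‖+1) + R := by
        calc ‖x + y‖ ≤ ‖x‖ + ‖y‖ := norm_add_le _ _
          _ ≤ (‖x‖+1) + R := add_le_add (by linarith) hyR
      have h := rpow_lip hp (norm_nonneg (z i + y)) (norm_nonneg (x + y)) hb1 hb2
      have habs : |‖z i + y‖ - ‖x + y‖| ≤ ε₁ := by
        refine le_trans (abs_norm_sub_norm_le _ _) ?_
        rw [show z i + y - (x + y) = z i - x by abel]
        exact hzix
      calc |‖z i + y‖ ^ p - ‖x + y‖ ^ p|
          ≤ p * ((‖x‖+1) + R) ^ (p-1) * |‖z i + y‖ - ‖x + y‖| := h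
        _ ≤ p * ((‖x‖+1) + R) ^ (p-1) * ε₁ := by
            apply mul_le_mul_of_nonneg_left habs (by positivity)
    have hsplitK : Kp p x y - Kp p (z i) y
        = 2 ^ (p-1) * (‖x‖ ^ p - ‖z i‖ ^ p) + (‖z i + y‖ ^ p - ‖x + y‖ ^ p) := by
      simp only [Kp]; ring
    have h2pos : (0:ℝ) < 2 ^ (p-1) := Real.rpow_pos_of_pos (by norm_num) _
    have hd1' : 2 ^ (p-1) * (‖x‖ ^ p - ‖z i‖ ^ p)
        ≤ 2 ^ (p-1) * (p * (‖x‖+1) ^ (p-1) * ε₁) := by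
      apply mul_le_mul_of_nonneg_left _ h2pos.le
      exact le_trans (le_abs_self _) hd1
    have hd2' : ‖z i + y‖ ^ p - ‖x + y‖ ^ p ≤ p * ((‖x‖+1) + R) ^ (p-1) * ε₁ :=
      le_trans (le_abs_self _) hd2
    have hKzy' : Kp p (z i) y ≤ δ₁/4 := by
      have : 2*η/(n:ℝ) ≤ δ₁/4 := by
        rw [div_le_div_iff₀ hnpos (by norm_num : (0:ℝ) < 4)]
        linarith
      linarith
    have hfin : 2 ^ (p-1) * (p * (‖x‖+1) ^ (p-1) * ε₁) + p * ((‖x‖+1) + R) ^ (p-1) * ε₁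
        ≤ δ₁/2 := by
      calc 2 ^ (p-1) * (p * (‖x‖+1) ^ (p-1) * ε₁) + p * ((‖x‖+1) + R) ^ (p-1) * ε₁
          = ε₁ * (2 ^ (p-1) * (p * (‖x‖+1) ^ (p-1)) + p * ((‖x‖+1) + R) ^ (p-1)) := by ring
        _ ≤ δ₁/2 := hε₁d
    linarith
  have hyx : ‖y - x‖ ≤ r/2 := hK1 y hKxy
  have hdist : dist y x < r := by rw [dist_eq_norm]; linarith
  have hcfy := hball hdist
  -- contradiction
  have : f y < c' := by
    rw [← EReal.coe_toReal hfytop hfybot, ← hcoe, EReal.coe_lt_coe_iff]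
    exact hfy_small
  exact absurd hcfy (not_lt.2 this.le)

end mainHard

set_option maxHeartbeats 1000000 in
/-- For a Banach space whose norm is locally uniformly convex and uniformly smooth,
`p > 1` and `f` proper, lower semicontinuous and bounded below:
`inf f ≤ Δ_n^p f ≤ f` and the minimizers of `Δ_n^p f` are exactly those of `f`. -/
theorem stmt_0 {X : Type*} [NormedAddCommGroup X] [NormedSpace ℝ X] [CompleteSpace X]
    (hLUR : ∀ x : X, ‖x‖ = 1 → ∀ ε : ℝ, 0 < ε → ∃ δ : ℝ, 0 < δ ∧
      ∀ y : X, ‖y‖ = 1 → ε ≤ ‖x - y‖ → ‖x + y‖ / 2 ≤ 1 - δ)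
    (hUS : Filter.Tendsto
      (fun τ : ℝ => (sSup {r : ℝ | ∃ x y : X, ‖x‖ = 1 ∧ ‖y‖ = 1 ∧
        r = (‖x + τ • y‖ + ‖x - τ • y‖) / 2 - 1}) / τ)
      (nhdsWithin 0 (Set.Ioi (0 : ℝ))) (nhds 0))
    (p : ℝ) (hp : 1 < p)
    (f : X → EReal)
    (hproper : ∃ x, f x ≠ ⊤)
    (hlsc : LowerSemicontinuous f)
    (hbdd : ∃ m : ℝ, ∀ x, (m : EReal) ≤ f x)
    (n : ℕ) (hn : 0 < n) :
    (∀ x : X, (⨅ z, f z) ≤ (Delta p f n x : EReal) ∧ (Delta p f n x : EReal) ≤ f x) ∧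
    {x : X | Delta p f n x = ⨅ z, Delta p f n z} = {x : X | f x = ⨅ z, f z} := by
  obtain ⟨m0, hm⟩ := hbdd
  obtain ⟨x₀, hx₀⟩ := hproper
  have hne : Nonempty X := ⟨x₀⟩
  have hμbot : (⨅ z, f z) ≠ ⊥ := mu_ne_bot hm
  have hμtop : (⨅ z, f z) ≠ ⊤ := mu_ne_top hx₀
  have hC0 : (0:ℝ) ≤ 2 ^ (p-1) * (n:ℝ) := by positivity
  have hglb : ∀ w : X, (⨅ z, f z).toReal + 2 ^ (p-1) * (n:ℝ) * ‖w‖ ^ p ≤ gnp p f n w :=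
    fun w => g_lower hp hm hx₀ w
  have hDelta_eq : ∀ w : X, Delta p f n w
      = convEnv (gnp p f n) w - 2 ^ (p-1) * (n:ℝ) * ‖w‖ ^ p := fun w => rfl
  have hDge : ∀ w : X, (⨅ z, f z).toReal ≤ Delta p f n w := by
    intro w
    have h1 := convEnv_lower hp (gnp p f n) hC0 hglb w
    rw [hDelta_eq w]
    linarith
  have hDle : ∀ w : X, f w ≠ ⊤ → Delta p f n w ≤ (f w).toReal := by
    intro w hfw
    have h1 := convEnv_le_self hp (gnp p f n) hC0 hglb w
    have h2 := g_upper (n := n) hp hm w hfw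
    rw [hDelta_eq w]
    linarith
  have hbddD : BddBelow (Set.range fun z : X => Delta p f n z) := by
    refine ⟨(⨅ z, f z).toReal, ?_⟩
    rintro _ ⟨w, rfl⟩
    exact hDge w
  have hinfD : (⨅ z, Delta p f n z) = (⨅ z, f z).toReal := by
    apply le_antisymm
    · apply le_of_forall_pos_le_add
      intro ε hε
      have hlt : (⨅ z, f z) < (((⨅ z, f z).toReal + ε : ℝ) : EReal) := by
        conv_lhs => rw [← EReal.coe_toReal hμtop hμbot]
        rw [EReal.coe_lt_coe_iff]
        linarith
      rw [iInf_lt_iff] at hlt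
      obtain ⟨w, hw⟩ := hlt
      have hfw_top : f w ≠ ⊤ := hw.ne_top
      have hfw_bot : f w ≠ ⊥ := ne_of_gt (lt_of_lt_of_le (EReal.bot_lt_coe m0) (hm w))
      have h1 : (f w).toReal < (⨅ z, f z).toReal + ε := by
        rw [← EReal.coe_toReal hfw_top hfw_bot, EReal.coe_lt_coe_iff] at hw
        exact hw
      calc (⨅ z, Delta p f n z) ≤ Delta p f n w := ciInf_le hbddD w
        _ ≤ (f w).toReal := hDle w hfw_top
        _ ≤ (⨅ z, f z).toReal + ε := h1.le
    · exact le_ciInf hDge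
  constructor
  · intro x
    constructor
    · rw [← EReal.coe_toReal hμtop hμbot, EReal.coe_le_coe_iff]
      exact hDge x
    · by_cases hfx : f x = ⊤
      · rw [hfx]; exact le_top
      · have hfx_bot : f x ≠ ⊥ := ne_of_gt (lt_of_lt_of_le (EReal.bot_lt_coe m0) (hm x))
        rw [← EReal.coe_toReal hfx hfx_bot, EReal.coe_le_coe_iff]
        exact hDle x hfx
  · ext w
    simp only [Set.mem_setOf_eq]
    constructor
    · intro hw
      rw [hinfD] at hw
      have hDx : convEnv (gnp p f n) w
          = (⨅ z, f z).toReal + 2 ^ (p-1) * (n : ℝ) * ‖w‖ ^ p := by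
        rw [hDelta_eq w] at hw
        linarith
      exact le_antisymm (main_hard hLUR hp f hlsc hm hx₀ n hn w hDx) (iInf_le f w)
    · intro hw
      have hfw_top : f w ≠ ⊤ := by rw [hw]; exact hμtop
      have h1 : (f w).toReal = (⨅ z, f z).toReal := by rw [hw]
      have h2 : Delta p f n w = (⨅ z, f z).toReal :=
        le_antisymm (by rw [← h1]; exact hDle w hfw_top) (hDge w)
      rw [hinfD]
      exact h2
end

section
/- Let X be a real Banach space whose norm is locally uniformly convex and uniformly smooth, let p > 1, and let f : X → ℝ ∪ {+∞} be proper, lower semicontinuous and bounded below. Then Δ_n^p f(x) → f(x) as n → ∞ for every x ∈ X (convergence in ℝ ∪ {+∞}); and if moreover f : X → ℝ is real-valued and continuous, then Δ_n^p f → f uniformly on every compact subset of X. -/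
open scoped BigOperators

set_option maxHeartbeats 1000000

section Aux

section scalar
variable {p : ℝ} (hp : 1 < p)
include hp

/-- gradient inequality for `t ^ p` at `a`. -/
lemma aux_grad1D {a t : ℝ} (ha : 0 ≤ a) (ht : 0 ≤ t) :
    a ^ p + p * a ^ (p - 1) * (t - a) ≤ t ^ p := by
  rcases eq_or_lt_of_le ha with h0 | h0
  · rw [← h0]
    rw [Real.zero_rpow (by linarith), Real.zero_rpow (by linarith)]
    simpa using Real.rpow_nonneg ht p
  · have hs : -1 ≤ t / a - 1 := by
      have : 0 ≤ t / a := div_nonneg ht h0.le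
      linarith
    have hb := one_add_mul_self_le_rpow_one_add hs hp.le
    have h1 : (1 : ℝ) + (t / a - 1) = t / a := by ring
    rw [h1] at hb
    rw [Real.div_rpow ht ha] at hb
    have hap : (0:ℝ) < a ^ p := Real.rpow_pos_of_pos h0 p
    have h2 : (1 + p*(t/a-1)) * a^p ≤ t^p := (le_div_iff₀ hap).mp hb
    have key : a^(p-1) = a^p / a := Real.rpow_sub_one h0.ne' p
    have h3 : a^p + p*a^(p-1)*(t-a) = (1 + p*(t/a-1))*a^p := by
      rw [key]; field_simp
    linarith

/-- Lipschitz bound for `t ^ p` on `[0, M]`. -/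
lemma aux_lip1D {s t M : ℝ} (hs : 0 ≤ s) (hst : s ≤ t) (htM : t ≤ M) :
    t ^ p - s ^ p ≤ p * M ^ (p - 1) * (t - s) := by
  have ht : 0 ≤ t := hs.trans hst
  have h1 := aux_grad1D hp ht hs
  have h2 : t ^ (p-1) ≤ M ^ (p-1) :=
    Real.rpow_le_rpow ht htM (by linarith)
  have hMp : 0 ≤ t ^ (p-1) := Real.rpow_nonneg ht _
  nlinarith [mul_nonneg (mul_nonneg (by linarith : (0:ℝ) ≤ p) (sub_nonneg.mpr hst)) (sub_nonneg.mpr h2)]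

/-- Norm version of the Lipschitz bound. -/
lemma aux_lipNorm {X : Type*} [NormedAddCommGroup X] {u v : X} {M : ℝ}
    (hu : ‖u‖ ≤ M) (hv : ‖v‖ ≤ M) :
    |‖u‖ ^ p - ‖v‖ ^ p| ≤ p * M ^ (p - 1) * ‖u - v‖ := by
  have hdiff : |‖u‖ - ‖v‖| ≤ ‖u - v‖ := abs_norm_sub_norm_le u v
  have hM1 : 0 ≤ M ^ (p-1) := Real.rpow_nonneg (le_trans (norm_nonneg u) hu) _
  have hc : 0 ≤ p * M ^ (p-1) := by positivity
  rcases le_total ‖v‖ ‖u‖ with h | h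
  · have := aux_lip1D hp (norm_nonneg v) h hu
    rw [abs_of_nonneg (by linarith [Real.rpow_le_rpow (norm_nonneg v) h (by linarith : (0:ℝ) ≤ p)] : (0:ℝ) ≤ ‖u‖^p - ‖v‖^p)]
    calc ‖u‖^p - ‖v‖^p ≤ p * M^(p-1) * (‖u‖ - ‖v‖) := this
      _ ≤ p * M^(p-1) * ‖u - v‖ := by
          apply mul_le_mul_of_nonneg_left _ hc
          calc ‖u‖ - ‖v‖ ≤ |‖u‖ - ‖v‖| := le_abs_self _
            _ ≤ ‖u - v‖ := hdiff
  · have := aux_lip1D hp (norm_nonneg u) h hv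
    rw [abs_sub_comm] at hdiff ⊢
    rw [abs_of_nonneg (by linarith [Real.rpow_le_rpow (norm_nonneg u) h (by linarith : (0:ℝ) ≤ p)] : (0:ℝ) ≤ ‖v‖^p - ‖u‖^p)]
    rw [norm_sub_rev] at hdiff ⊢
    calc ‖v‖^p - ‖u‖^p ≤ p * M^(p-1) * (‖v‖ - ‖u‖) := this
      _ ≤ p * M^(p-1) * ‖v - u‖ := by
          apply mul_le_mul_of_nonneg_left _ hc
          calc ‖v‖ - ‖u‖ ≤ |‖v‖ - ‖u‖| := le_abs_self _
            _ ≤ ‖v - u‖ := hdiff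

/-- two point Jensen. -/
lemma aux_jensen2 {s t : ℝ} (hs : 0 ≤ s) (ht : 0 ≤ t) :
    (s + t) ^ p ≤ 2 ^ (p - 1) * (s ^ p + t ^ p) := by
  have hc := (convexOn_rpow hp.le).2 (Set.mem_Ici.mpr hs) (Set.mem_Ici.mpr ht)
    (by norm_num : (0:ℝ) ≤ 1/2) (by norm_num : (0:ℝ) ≤ 1/2) (by norm_num)
  simp only [smul_eq_mul] at hc
  have h1 : (1/2 : ℝ) * s + 1/2 * t = (s+t)/2 := by ring
  rw [h1] at hc
  have h2 : ((s+t)/2) ^ p = (s+t)^p / 2^p := Real.div_rpow (by linarith) (by norm_num) p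
  rw [h2] at hc
  have h2p : (0:ℝ) < 2 ^ p := Real.rpow_pos_of_pos (by norm_num) p
  have h3 : (2:ℝ)^p = 2^(p-1) * 2 := by
    rw [← Real.rpow_add_one (by norm_num : (2:ℝ) ≠ 0) (p-1)]; norm_num
  rw [div_le_iff₀ h2p] at hc
  calc (s+t)^p ≤ (1/2 * s^p + 1/2 * t^p) * 2^p := hc
    _ = 2^(p-1) * (s^p + t^p) := by rw [h3]; ring

lemma aux_jensen2_strict {s t : ℝ} (hs : 0 ≤ s) (ht : 0 ≤ t) (hst : s ≠ t) :
    (s + t) ^ p < 2 ^ (p - 1) * (s ^ p + t ^ p) := by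
  have hc := (strictConvexOn_rpow hp).2 (Set.mem_Ici.mpr hs) (Set.mem_Ici.mpr ht)
    hst (by norm_num : (0:ℝ) < 1/2) (by norm_num : (0:ℝ) < 1/2) (by norm_num)
  simp only [smul_eq_mul] at hc
  have h1 : (1/2 : ℝ) * s + 1/2 * t = (s+t)/2 := by ring
  rw [h1] at hc
  have h2 : ((s+t)/2) ^ p = (s+t)^p / 2^p := Real.div_rpow (by linarith) (by norm_num) p
  rw [h2] at hc
  have h2p : (0:ℝ) < 2 ^ p := Real.rpow_pos_of_pos (by norm_num) p
  have h3 : (2:ℝ)^p = 2^(p-1) * 2 := by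
    rw [← Real.rpow_add_one (by norm_num : (2:ℝ) ≠ 0) (p-1)]; norm_num
  rw [div_lt_iff₀ h2p] at hc
  calc (s+t)^p < (1/2 * s^p + 1/2 * t^p) * 2^p := hc
    _ = 2^(p-1) * (s^p + t^p) := by rw [h3]; ring


lemma aux_two_rpow : (2:ℝ) ^ p = 2 ^ (p-1) * 2 := by
  rw [← Real.rpow_add_one (by norm_num : (2:ℝ) ≠ 0) (p-1)]; norm_num

variable {X : Type*} [NormedAddCommGroup X] [NormedSpace ℝ X]

lemma aux_Kp_ge (x y : X) :
    2 ^ (p-1) * ‖x‖ ^ p + 2 ^ (p-1) * ‖y‖ ^ p - (‖x‖ + ‖y‖) ^ p ≤ Kp p x y := by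
  have h1 : ‖x + y‖ ^ p ≤ (‖x‖ + ‖y‖) ^ p :=
    Real.rpow_le_rpow (norm_nonneg _) (norm_add_le x y) (by linarith)
  simp only [Kp]; linarith

lemma aux_Kp_nonneg (x y : X) : 0 ≤ Kp p x y := by
  have h2 := aux_jensen2 hp (norm_nonneg x) (norm_nonneg y)
  have := aux_Kp_ge hp x y
  simp only [Kp] at *; linarith

lemma aux_Kp_self (w : X) : Kp p w w = 0 := by
  have h1 : ‖w + w‖ = 2 * ‖w‖ := by
    rw [← two_smul ℝ w, norm_smul]; simp
  have h2 : (2 * ‖w‖) ^ p = 2 ^ p * ‖w‖ ^ p :=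
    Real.mul_rpow (by norm_num) (norm_nonneg w)
  simp only [Kp, h1, h2, aux_two_rpow hp]; ring

lemma aux_Kp_coercive {R₀ : ℝ} (hR₀ : 0 ≤ R₀) :
    ∃ R₂ : ℝ, 0 < R₂ ∧ ∀ (z y : X), ‖z‖ ≤ R₀ → R₂ ≤ ‖y‖ → 1 ≤ Kp p z y := by
  set μ : ℝ := 2 ^ ((p-1)/p) with hμdef
  have hp0 : (0:ℝ) < p := by linarith
  have hμ1 : 1 < μ := by
    rw [hμdef]
    apply Real.one_lt_rpow_iff_of_pos (by norm_num) |>.mpr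
    exact Or.inl ⟨by norm_num, div_pos (by linarith) hp0⟩
  set θ : ℝ := (1 + μ)/2 with hθdef
  have hθ1 : 1 < θ := by rw [hθdef]; linarith
  have hθμ : θ < μ := by rw [hθdef]; linarith
  have hμp : μ ^ p = 2 ^ (p-1) := by
    rw [hμdef, ← Real.rpow_mul (by norm_num : (0:ℝ) ≤ 2), div_mul_cancel₀ _ hp0.ne']
  have hθp : θ ^ p < 2 ^ (p-1) := by
    rw [← hμp]
    exact Real.rpow_lt_rpow (by linarith) hθμ hp0
  have hgap : 0 < 2 ^ (p-1) - θ ^ p := by linarith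
  set d : ℝ := 1 / (2 ^ (p-1) - θ ^ p) with hddef
  have hd : 0 < d := by positivity
  refine ⟨max (R₀/(θ-1)) (d ^ (1/p)) + 1, by positivity, ?_⟩
  intro z y hz hy
  have hb0 : 0 ≤ ‖y‖ := norm_nonneg y
  have hb1 : R₀ / (θ-1) ≤ ‖y‖ := by
    have := le_max_left (R₀/(θ-1)) (d ^ (1/p)); linarith
  have hb2 : d ^ (1/p) ≤ ‖y‖ := by
    have := le_max_right (R₀/(θ-1)) (d ^ (1/p)); linarith
  have hR0b : R₀ ≤ (θ-1) * ‖y‖ := by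
    rw [div_le_iff₀ (by linarith : (0:ℝ) < θ-1)] at hb1; linarith [hb1]
  have hsum : ‖z‖ + ‖y‖ ≤ θ * ‖y‖ := by linarith
  have h4 : (‖z‖ + ‖y‖) ^ p ≤ (θ * ‖y‖) ^ p :=
    Real.rpow_le_rpow (by positivity) hsum (by linarith)
  have h5 : (θ * ‖y‖) ^ p = θ ^ p * ‖y‖ ^ p := Real.mul_rpow (by linarith) hb0
  have h6 : d ≤ ‖y‖ ^ p := by
    calc d = (d ^ (1/p)) ^ p := by
          rw [← Real.rpow_mul hd.le, one_div, inv_mul_cancel₀ hp0.ne', Real.rpow_one]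
      _ ≤ ‖y‖ ^ p := Real.rpow_le_rpow (Real.rpow_nonneg hd.le _) hb2 hp0.le
  have h7 : 1 ≤ (2 ^ (p-1) - θ ^ p) * ‖y‖ ^ p := by
    rw [hddef] at h6
    rw [div_le_iff₀ hgap] at h6
    linarith [h6]
  have h8 := aux_Kp_ge hp z y
  have h9 : 0 ≤ ‖z‖ ^ p := Real.rpow_nonneg (norm_nonneg z) p
  have hc : (0:ℝ) < 2^(p-1) := Real.rpow_pos_of_pos (by norm_num) _
  have h4' : (‖z‖ + ‖y‖) ^ p ≤ θ ^ p * ‖y‖ ^ p := h5 ▸ h4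
  nlinarith [h8, h7, h4', mul_nonneg hc.le h9]

lemma aux_Kp_lip {R : ℝ} (hR : 0 ≤ R) (z w y : X)
    (hz : ‖z‖ ≤ R) (hw : ‖w‖ ≤ R) (hy : ‖y‖ ≤ R) :
    |Kp p z y - Kp p w y| ≤ (2^(p-1)+1) * (p * (2*R) ^ (p-1)) * ‖z - w‖ := by
  have hc : (0:ℝ) < 2^(p-1) := Real.rpow_pos_of_pos (by norm_num) _
  have h1 : |‖z‖^p - ‖w‖^p| ≤ p * (2*R)^(p-1) * ‖z - w‖ :=
    aux_lipNorm hp (by linarith) (by linarith)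
  have h2 : |‖z+y‖^p - ‖w+y‖^p| ≤ p * (2*R)^(p-1) * ‖(z+y) - (w+y)‖ :=
    aux_lipNorm hp (le_trans (norm_add_le _ _) (by linarith))
      (le_trans (norm_add_le _ _) (by linarith))
  have h3 : (z+y) - (w+y) = z - w := by abel
  rw [h3] at h2
  have h4 : Kp p z y - Kp p w y
      = 2^(p-1) * (‖z‖^p - ‖w‖^p) - (‖z+y‖^p - ‖w+y‖^p) := by
    simp only [Kp]; ring
  calc |Kp p z y - Kp p w y|
      ≤ 2^(p-1) * |‖z‖^p - ‖w‖^p| + |‖z+y‖^p - ‖w+y‖^p| := by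
        rw [h4]
        calc |2^(p-1) * (‖z‖^p - ‖w‖^p) - (‖z+y‖^p - ‖w+y‖^p)|
            ≤ |2^(p-1) * (‖z‖^p - ‖w‖^p)| + |‖z+y‖^p - ‖w+y‖^p| := abs_sub _ _
          _ = 2^(p-1) * |‖z‖^p - ‖w‖^p| + |‖z+y‖^p - ‖w+y‖^p| := by
              rw [abs_mul, abs_of_pos hc]
    _ ≤ (2^(p-1)+1) * (p * (2*R) ^ (p-1)) * ‖z - w‖ := by nlinarith [abs_nonneg (‖z‖^p - ‖w‖^p)]

lemma aux_psi_pos {a R s : ℝ} (ha : 0 ≤ a) (hs : 0 < s) :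
    ∃ ι : ℝ, 0 < ι ∧ ∀ b : ℝ, 0 ≤ b → b ≤ R → s ≤ |b - a| →
      ι ≤ 2 ^ (p-1) * (a ^ p + b ^ p) - (a + b) ^ p := by
  classical
  set ψ : ℝ → ℝ := fun b => 2 ^ (p-1) * (a ^ p + b ^ p) - (a + b) ^ p with hψdef
  set S : Set ℝ := Set.Icc 0 R ∩ {b | s ≤ |b - a|} with hSdef
  have hScomp : IsCompact S := by
    apply isCompact_Icc.inter_right
    have : Continuous fun b : ℝ => |b - a| := (continuous_id.sub continuous_const).abs
    exact isClosed_le continuous_const this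
  have hψcont : Continuous ψ := by
    have h1 : Continuous fun b : ℝ => b ^ p := Real.continuous_rpow_const (by linarith)
    have h2 : Continuous fun b : ℝ => (a + b) ^ p :=
      (Real.continuous_rpow_const (by linarith)).comp (continuous_const.add continuous_id)
    continuity
  rcases S.eq_empty_or_nonempty with hS | hS
  · exact ⟨1, one_pos, fun b hb0 hbR hba => absurd (by
      rw [hSdef] at hS
      exact hS ▸ (Set.mem_inter (Set.mem_Icc.mpr ⟨hb0, hbR⟩) hba : b ∈ S)) (Set.notMem_empty b)⟩
  · obtain ⟨b₀, hb₀S, hmin⟩ := hScomp.exists_isMinOn hS hψcont.continuousOn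
    have hb₀0 : 0 ≤ b₀ := hb₀S.1.1
    have hb₀a : b₀ ≠ a := by
      intro h
      have := hb₀S.2
      rw [h] at this
      simp only [Set.mem_setOf_eq, sub_self, abs_zero] at this
      linarith
    have hψpos : 0 < ψ b₀ := by
      have := aux_jensen2_strict hp ha hb₀0 (fun h => hb₀a h.symm)
      simp only [hψdef]; linarith
    exact ⟨ψ b₀, hψpos, fun b hb0 hbR hba =>
      hmin (Set.mem_inter (Set.mem_Icc.mpr ⟨hb0, hbR⟩) hba)⟩

lemma aux_lur_Kp
    (hLUR : ∀ x : X, ‖x‖ = 1 → ∀ ε : ℝ, 0 < ε → ∃ δ : ℝ, 0 < δ ∧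
      ∀ y : X, ‖y‖ = 1 → ε ≤ ‖x - y‖ → ‖x + y‖ / 2 ≤ 1 - δ)
    (x : X) {r : ℝ} (hr : 0 < r) :
    ∃ κ : ℝ, 0 < κ ∧ ∀ y : X, r ≤ ‖y - x‖ → κ ≤ Kp p x y := by
  classical
  have hp0 : (0:ℝ) < p := by linarith
  have hc1 : (1:ℝ) < 2 ^ (p-1) := by
    have : (2:ℝ) ^ (0:ℝ) < 2 ^ (p-1) :=
      Real.rpow_lt_rpow_left_iff (by norm_num : (1:ℝ) < 2) |>.mpr (by linarith)
    simpa using this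
  obtain ⟨R₂, hR₂pos, hcoer⟩ := aux_Kp_coercive hp (X := X) (norm_nonneg x)
  by_cases ha0 : ‖x‖ = 0
  · -- x = 0
    have hx0 : x = 0 := norm_eq_zero.mp ha0
    refine ⟨(2^(p-1) - 1) * r ^ p, by
      have : (0:ℝ) < r ^ p := Real.rpow_pos_of_pos hr p
      nlinarith, ?_⟩
    intro y hy
    rw [hx0] at *
    have hyr : r ≤ ‖y‖ := by simpa using hy
    have hyp : r ^ p ≤ ‖y‖ ^ p := Real.rpow_le_rpow hr.le hyr hp0.le
    have h0p : ‖(0:X)‖ ^ p = 0 := by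
      simp [Real.zero_rpow hp0.ne']
    simp only [Kp, h0p, zero_add, mul_zero]
    have hyp0 : 0 ≤ ‖y‖ ^ p := Real.rpow_nonneg (norm_nonneg y) p
    nlinarith
  · have ha : 0 < ‖x‖ := lt_of_le_of_ne (norm_nonneg x) (Ne.symm ha0)
    set a := ‖x‖ with hadef
    set xh : X := a⁻¹ • x with hxhdef
    have hxh1 : ‖xh‖ = 1 := by
      rw [hxhdef, norm_smul, norm_inv, Real.norm_eq_abs, abs_of_pos ha, inv_mul_cancel₀ ha.ne']
    set ε₁ : ℝ := min 1 (r / (2*a)) with hε₁def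
    have hε₁pos : 0 < ε₁ := lt_min one_pos (by positivity)
    obtain ⟨δ₀, hδ₀pos, hδ₀⟩ := hLUR xh hxh1 ε₁ hε₁pos
    set δ : ℝ := min δ₀ 1 with hδdef
    have hδpos : 0 < δ := lt_min hδ₀pos one_pos
    have hδ1 : δ ≤ 1 := min_le_right _ _
    have hδle : δ ≤ δ₀ := min_le_left _ _
    have hquarter : 0 ≤ 1 - δ/4 := by linarith
    have hpow1 : (1 - δ/4) ^ p < 1 := by
      apply Real.rpow_lt_one hquarter (by linarith) hp0
    set c : ℝ := 2 ^ (p-1) with hcdef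
    have hcpos : (0:ℝ) < c := by linarith
    have hap : (0:ℝ) < a ^ p := Real.rpow_pos_of_pos ha p
    set G : ℝ := 2*c*a^p*(1 - (1-δ/4)^p) with hGdef
    have hGpos : 0 < G := by
      have h1 : 0 < 1 - (1-δ/4)^p := by linarith
      positivity
    have hap1 : (0:ℝ) ≤ a ^ (p-1) := Real.rpow_nonneg ha.le _
    set s₀ : ℝ := min (min (r/4) (a/2)) (min (a*δ/2) (G/(2*c*p*a^(p-1)+1))) with hs₀def
    have hs₀pos : 0 < s₀ := by
      apply lt_min (lt_min (by positivity) (by positivity))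
      apply lt_min (by positivity) (by positivity)
    have hs₀r : s₀ ≤ r/4 := le_trans (min_le_left _ _) (min_le_left _ _)
    have hs₀a : s₀ ≤ a/2 := le_trans (min_le_left _ _) (min_le_right _ _)
    have hs₀δ : s₀ ≤ a*δ/2 := le_trans (min_le_right _ _) (min_le_left _ _)
    have hs₀G : s₀ ≤ G/(2*c*p*a^(p-1)+1) := le_trans (min_le_right _ _) (min_le_right _ _)
    obtain ⟨ι, hιpos, hψ⟩ := aux_psi_pos hp (ha := ha.le) (hs := hs₀pos) (R := R₂)
    refine ⟨min 1 (min ι (G/4)), by positivity, ?_⟩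
    intro y hyx
    by_contra hcon
    push_neg at hcon
    have hκ1 : Kp p x y < 1 := lt_of_lt_of_le hcon (min_le_left _ _)
    have hκι : Kp p x y < ι := lt_of_lt_of_le hcon (le_trans (min_le_right _ _) (min_le_left _ _))
    have hκG : Kp p x y < G/4 := lt_of_lt_of_le hcon (le_trans (min_le_right _ _) (min_le_right _ _))
    set b := ‖y‖ with hbdef
    have hb0 : 0 ≤ b := norm_nonneg y
    -- y is not too large
    have hbR₂ : b ≤ R₂ := by
      by_contra hbig
      push_neg at hbig
      exact absurd (hcoer x y le_rfl hbig.le) (by linarith)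
    -- |b - a| < s₀
    have hba : |b - a| < s₀ := by
      by_contra hfar
      push_neg at hfar
      have h1 := hψ b hb0 hbR₂ hfar
      have h2 := aux_Kp_ge hp x y
      simp only [Kp] at h2 hκι ⊢
      linarith [h1, h2, hκι]
    have hbal : a - s₀ ≤ b := by
      have := abs_lt.mp hba
      linarith [this.1]
    have hbau : b ≤ a + s₀ := by
      have := abs_lt.mp hba
      linarith [this.2]
    have hbpos : 0 < b := by linarith
    -- lower bound on ‖x + y‖
    have hlip : a^p - (a-s₀)^p ≤ p * a^(p-1) * s₀ := by
      have := aux_lip1D hp (s := a - s₀) (t := a) (M := a) (by linarith) (by linarith) le_rfl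
      linarith
    have hbp : (a - s₀)^p ≤ b^p := Real.rpow_le_rpow (by linarith) hbal hp0.le
    have hG2 : c * (p * a^(p-1) * s₀) ≤ G/2 := by
      have h1 : s₀ * (2*c*p*a^(p-1)+1) ≤ G := by
        rw [div_eq_mul_inv] at hs₀G
        have h2 : (0:ℝ) < 2*c*p*a^(p-1)+1 := by positivity
        calc s₀ * (2*c*p*a^(p-1)+1) ≤ (G/(2*c*p*a^(p-1)+1)) * (2*c*p*a^(p-1)+1) := by
              apply mul_le_mul_of_nonneg_right _ h2.le
              rw [div_eq_mul_inv]; exact hs₀G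
          _ = G := by field_simp
      linarith [h1, hs₀pos]
    have hxyp : (2*a*(1-δ/4))^p ≤ ‖x + y‖ ^ p := by
      have h1 : 2*c*a^p*(1-δ/4)^p = 2*c*a^p - G := by rw [hGdef]; ring
      have h2 : (2*a*(1-δ/4))^p = 2^p * a^p * (1-δ/4)^p := by
        rw [show 2*a*(1-δ/4) = 2*(a*(1-δ/4)) by ring,
          Real.mul_rpow (by norm_num) (by positivity),
          Real.mul_rpow ha.le hquarter]
        ring
      have h3 : (2:ℝ)^p = 2*c := by rw [hcdef, aux_two_rpow hp]; ring
      have h4 : c*(a^p + b^p) - ‖x+y‖^p < G/4 := by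
        simp only [Kp] at hκG; rw [hcdef]; linarith
      -- ‖x+y‖^p ≥ c a^p + c b^p - G/4 ≥ 2 c a^p - c(a^p - (a-s₀)^p) - G/4
      have e1 : c * (a-s₀)^p ≤ c * b^p := mul_le_mul_of_nonneg_left hbp hcpos.le
      have e2 : c * (a^p - (a-s₀)^p) ≤ c * (p * a^(p-1) * s₀) :=
        mul_le_mul_of_nonneg_left hlip hcpos.le
      rw [h2, h3]
      have h1' : 2*c*a^p*(1-δ/4)^p = 2*c*a^p - G := h1
      calc 2*c*a^p*(1-δ/4)^p = 2*c*a^p - G := h1'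
        _ ≤ ‖x+y‖^p := by linarith [hGpos, e1, e2, hG2, h4]
    have hxy : 2*a*(1-δ/4) ≤ ‖x + y‖ := by
      by_contra hlt
      push_neg at hlt
      have := Real.rpow_lt_rpow (norm_nonneg _) hlt hp0
      linarith
    -- normalized vectors
    set u : X := b⁻¹ • y with hudef
    have hu1 : ‖u‖ = 1 := by
      rw [hudef, norm_smul, norm_inv, Real.norm_eq_abs, abs_of_pos hbpos, inv_mul_cancel₀ hbpos.ne']
    have hsum : 2 - δ ≤ ‖xh + u‖ := by
      have h1 : a • (xh + u) = (x + y) + ((a - b)/b) • y := by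
        rw [hxhdef, hudef, smul_add, smul_smul, smul_smul, mul_inv_cancel₀ ha.ne', one_smul]
        have : a * b⁻¹ = 1 + (a-b)/b := by field_simp; ring
        rw [this, add_smul, one_smul]
        abel
      have h2 : ‖((a - b)/b) • y‖ = |a - b| := by
        rw [norm_smul, Real.norm_eq_abs, abs_div, abs_of_pos hbpos]
        field_simp; rw [hbdef]; ring
      have h3 : a * ‖xh + u‖ = ‖a • (xh + u)‖ := by
        rw [norm_smul, Real.norm_eq_abs, abs_of_pos ha]
      have h4 : ‖(x + y) + ((a - b)/b) • y‖ ≥ ‖x + y‖ - |a - b| := by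
        have t := norm_sub_le ((x + y) + ((a - b)/b) • y) (((a - b)/b) • y)
        have e : ((x + y) + ((a - b)/b) • y) - ((a - b)/b) • y = x + y := by abel
        rw [e] at t
        rw [h2] at t
        linarith
      have h5 : a * ‖xh + u‖ ≥ 2*a*(1-δ/4) - s₀ := by
        rw [h3, h1]
        have : |a - b| ≤ s₀ := by rw [abs_sub_comm]; exact hba.le
        linarith [h4, hxy]
      have h6 : 2*a*(1-δ/4) - s₀ ≥ a * (2 - δ) := by
        have h := hs₀δ
        ring_nf
        ring_nf at h
        linarith
      have h7 : a * ‖xh + u‖ ≥ a * (2 - δ) := by linarith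
      exact le_of_mul_le_mul_left (by linarith) ha
    have hclose : ‖xh - u‖ < ε₁ := by
      by_contra hfar
      push_neg at hfar
      have := hδ₀ u hu1 hfar
      have h8 : ‖xh + u‖ / 2 ≤ 1 - δ₀ := this
      have h9 : δ ≤ δ₀ := hδle
      linarith [hδpos, hsum]
    -- conclude ‖x - y‖ < r
    have hfinal : ‖x - y‖ < r := by
      have h1 : x - y = a • (xh - u) + (a • u - y) := by
        rw [hxhdef, smul_sub, smul_smul, mul_inv_cancel₀ ha.ne', one_smul]
        abel
      have h2 : ‖a • (xh - u)‖ = a * ‖xh - u‖ := by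
        rw [norm_smul, Real.norm_eq_abs, abs_of_pos ha]
      have h3 : a • u - y = ((a - b)/b) • y := by
        rw [hudef, smul_smul]
        have : a * b⁻¹ = 1 + (a-b)/b := by field_simp; ring
        rw [this, add_smul, one_smul]
        abel
      have h4 : ‖a • u - y‖ = |a - b| := by
        rw [h3, norm_smul, Real.norm_eq_abs, abs_div, abs_of_pos hbpos]
        field_simp; rw [hbdef]; ring
      have h5 : a * ‖xh - u‖ < a * (r/(2*a)) := by
        apply mul_lt_mul_of_pos_left _ ha
        exact lt_of_lt_of_le hclose (min_le_right _ _)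
      have h6 : a * (r/(2*a)) = r/2 := by field_simp
      have h7 : |a - b| < r/4 := by
        rw [abs_sub_comm]; exact lt_of_lt_of_le hba hs₀r
      calc ‖x - y‖ ≤ ‖a • (xh - u)‖ + ‖a • u - y‖ := by rw [h1]; exact norm_add_le _ _
        _ < r/2 + r/4 := by rw [h2, h4]; linarith
        _ < r := by linarith
    rw [norm_sub_rev] at hfinal
    linarith

lemma aux_subgrad (w : X) :
    ∃ ℓ : X →L[ℝ] ℝ, ℓ w = p * ‖w‖^(p-1) * ‖w‖ ∧ ∀ z, ℓ z ≤ p * ‖w‖^(p-1) * ‖z‖ := by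
  obtain ⟨g, hg1, hg2⟩ := exists_dual_vector'' ℝ w
  have hcoef : (0:ℝ) ≤ p * ‖w‖^(p-1) := by
    have := Real.rpow_nonneg (norm_nonneg w) (p-1); nlinarith [hp]
  refine ⟨(p * ‖w‖^(p-1)) • g, ?_, ?_⟩
  · simp only [ContinuousLinearMap.smul_apply, smul_eq_mul, hg2]
    norm_num
  · intro z
    simp only [ContinuousLinearMap.smul_apply, smul_eq_mul]
    have h1 : g z ≤ ‖z‖ := by
      calc g z ≤ |g z| := le_abs_self _
        _ = ‖g z‖ := (Real.norm_eq_abs _).symm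
        _ ≤ ‖g‖ * ‖z‖ := g.le_opNorm z
        _ ≤ 1 * ‖z‖ := mul_le_mul_of_nonneg_right hg1 (norm_nonneg z)
        _ = ‖z‖ := one_mul _
    exact mul_le_mul_of_nonneg_left h1 hcoef

lemma aux_B_nonneg (w : X) (ℓ : X →L[ℝ] ℝ)
    (hℓ1 : ℓ w = p * ‖w‖^(p-1) * ‖w‖) (hℓ2 : ∀ z, ℓ z ≤ p * ‖w‖^(p-1) * ‖z‖) (z : X) :
    0 ≤ ‖z‖^p - ‖w‖^p - ℓ z + ℓ w := by
  have h1 := aux_grad1D hp (norm_nonneg w) (norm_nonneg z)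
  have h2 := hℓ2 z
  rw [hℓ1]
  nlinarith [h1, h2]

lemma aux_KpB (w : X) (ℓ : X →L[ℝ] ℝ)
    (hℓ1 : ℓ w = p * ‖w‖^(p-1) * ‖w‖) (hℓ2 : ∀ z, ℓ z ≤ p * ‖w‖^(p-1) * ‖z‖) (z : X) :
    Kp p w z ≤ 2^(p-1) * (‖z‖^p - ‖w‖^p - ℓ z + ℓ w) := by
  have hmid := aux_B_nonneg hp w ℓ hℓ1 hℓ2 ((1/2 : ℝ) • (w + z))
  have h1 : ‖(1/2 : ℝ) • (w + z)‖ = 2⁻¹ * ‖w + z‖ := by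
    rw [norm_smul, Real.norm_eq_abs]; norm_num
  have h2 : (2⁻¹ * ‖w + z‖) ^ p = (2^p)⁻¹ * ‖w+z‖^p := by
    rw [Real.mul_rpow (by norm_num) (norm_nonneg _), ← Real.inv_rpow (by norm_num : (0:ℝ) ≤ 2)]
  have h3 : ℓ ((1/2 : ℝ) • (w + z)) = (ℓ w + ℓ z)/2 := by
    rw [map_smul, map_add]; simp; ring
  rw [h1, h2, h3] at hmid
  have h4 : (0:ℝ) < 2^p := Real.rpow_pos_of_pos (by norm_num) p
  have h5 : (2:ℝ)^p = 2^(p-1)*2 := aux_two_rpow hp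
  have h6 := mul_le_mul_of_nonneg_left hmid h4.le
  rw [mul_zero] at h6
  have h7 : (2:ℝ)^p * ((2 ^ p)⁻¹ * ‖w + z‖ ^ p - ‖w‖ ^ p - (ℓ w + ℓ z) / 2 + ℓ w)
      = ‖w+z‖^p - 2^p * ‖w‖^p - (2^(p-1)) * ℓ z + (2^(p-1)) * ℓ w := by
    field_simp
    rw [h5]; ring
  rw [h7] at h6
  rw [h5] at h6
  simp only [Kp]
  linarith [h6]

lemma aux_geom
    (hLUR : ∀ x : X, ‖x‖ = 1 → ∀ ε : ℝ, 0 < ε → ∃ δ : ℝ, 0 < δ ∧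
      ∀ y : X, ‖y‖ = 1 → ε ≤ ‖x - y‖ → ‖x + y‖ / 2 ≤ 1 - δ)
    (x : X) {r : ℝ} (hr : 0 < r) :
    ∃ κ ρ : ℝ, 0 < κ ∧ 0 < ρ ∧ ∀ (w : X) (ℓ : X →L[ℝ] ℝ), ‖w - x‖ ≤ ρ →
      ℓ w = p * ‖w‖^(p-1) * ‖w‖ → (∀ z, ℓ z ≤ p * ‖w‖^(p-1) * ‖z‖) →
      ∀ (z y : X), r ≤ ‖y - w‖ →
        κ ≤ Kp p z y + 2^(p-1) * (‖z‖^p - ‖w‖^p - ℓ z + ℓ w) := by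
  classical
  obtain ⟨κ₁, hκ₁pos, hκ₁⟩ := aux_lur_Kp hp hLUR x (half_pos hr)
  set R₀ : ℝ := ‖x‖ + r + 2 with hR₀def
  have hR₀pos : 0 < R₀ := by positivity
  obtain ⟨R₂, hR₂pos, hcoer⟩ := aux_Kp_coercive hp (X := X) hR₀pos.le
  set Rb : ℝ := R₀ + R₂ + 1 with hRbdef
  have hRbpos : 0 < Rb := by positivity
  set L : ℝ := (2^(p-1)+1) * (p * (2*Rb)^(p-1)) with hLdef
  have hLpos : 0 ≤ L := by
    rw [hLdef]
    have h1 : (0:ℝ) < 2^(p-1) := Real.rpow_pos_of_pos (by norm_num) _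
    have h2 : (0:ℝ) ≤ (2*Rb)^(p-1) := Real.rpow_nonneg (by positivity) _
    exact mul_nonneg (by linarith) (mul_nonneg (by linarith) h2)
  set t : ℝ := min (min (r/2) 1) (κ₁/(4*L+1)) with htdef
  have htpos : 0 < t := by
    exact lt_min (lt_min (by positivity) one_pos) (div_pos hκ₁pos (by linarith))
  have htr : t ≤ r/2 := le_trans (min_le_left _ _) (min_le_left _ _)
  have ht1 : t ≤ 1 := le_trans (min_le_left _ _) (min_le_right _ _)
  have htκ : t ≤ κ₁/(4*L+1) := min_le_right _ _
  obtain ⟨κ₂, hκ₂pos, hκ₂⟩ := aux_lur_Kp hp hLUR x (half_pos htpos)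
  set ρ : ℝ := min (min (t/2) 1) (min (κ₂/(2*L+1)) (κ₁/(4*L+1))) with hρdef
  have hρpos : 0 < ρ := by
    exact lt_min (lt_min (by positivity) one_pos)
      (lt_min (div_pos hκ₂pos (by linarith)) (div_pos hκ₁pos (by linarith)))
  have hρt : ρ ≤ t/2 := le_trans (min_le_left _ _) (min_le_left _ _)
  have hρ1 : ρ ≤ 1 := le_trans (min_le_left _ _) (min_le_right _ _)
  have hρκ₂ : ρ ≤ κ₂/(2*L+1) := le_trans (min_le_right _ _) (min_le_left _ _)
  have hρκ₁ : ρ ≤ κ₁/(4*L+1) := le_trans (min_le_right _ _) (min_le_right _ _)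
  refine ⟨min 1 (min (κ₂/2) (κ₁/2)), ρ,
    lt_min one_pos (lt_min (by linarith) (by linarith)), hρpos, ?_⟩
  intro w ℓ hwx hℓ1 hℓ2 z y hyw
  have hBnn : 0 ≤ ‖z‖^p - ‖w‖^p - ℓ z + ℓ w := aux_B_nonneg hp w ℓ hℓ1 hℓ2 z
  have hKnn : 0 ≤ Kp p z y := aux_Kp_nonneg hp z y
  have hcpos : (0:ℝ) < 2^(p-1) := Real.rpow_pos_of_pos (by norm_num) _
  have hwn : ‖w‖ ≤ ‖x‖ + 1 := by
    calc ‖w‖ = ‖x + (w - x)‖ := by congr 1; abel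
      _ ≤ ‖x‖ + ‖w - x‖ := norm_add_le _ _
      _ ≤ ‖x‖ + 1 := by linarith
  rcases le_or_gt t ‖z - w‖ with hA | hB
  · -- Case A : z is far from w
    have hKwz : min 1 (κ₂/2) ≤ Kp p w z := by
      rcases le_or_gt R₂ ‖z‖ with hzbig | hzsmall
      · exact le_trans (min_le_left _ _) (hcoer w z (by rw [hR₀def]; linarith) hzbig)
      · have hzx : t/2 ≤ ‖z - x‖ := by
          have : ‖z - w‖ ≤ ‖z - x‖ + ‖w - x‖ := by
            calc ‖z - w‖ = ‖(z - x) - (w - x)‖ := by congr 1; abel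
              _ ≤ ‖z - x‖ + ‖w - x‖ := norm_sub_le _ _
          linarith
        have h1 : κ₂ ≤ Kp p x z := hκ₂ z hzx
        have h2 : |Kp p w z - Kp p x z| ≤ L * ‖w - x‖ := by
          rw [hLdef]
          exact aux_Kp_lip hp hRbpos.le w x z (by rw [hRbdef]; linarith)
            (by rw [hRbdef, hR₀def]; linarith [norm_nonneg (x : X), hR₂pos])
            (by rw [hRbdef]; linarith)
        have h3 : L * ‖w - x‖ ≤ L * ρ := mul_le_mul_of_nonneg_left hwx hLpos
        have h4 : L * ρ ≤ κ₂/2 := by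
          have h5 : ρ * (2*L+1) ≤ κ₂ := by
            rw [div_eq_mul_inv] at hρκ₂
            have h6 : (0:ℝ) < 2*L+1 := by linarith
            calc ρ * (2*L+1) ≤ (κ₂ * (2*L+1)⁻¹) * (2*L+1) :=
                  mul_le_mul_of_nonneg_right hρκ₂ h6.le
              _ = κ₂ := by field_simp
          linarith [h5, hρpos]
        have := abs_le.mp h2
        exact le_trans (min_le_right _ _) (by linarith [this.1])
    have hKB : Kp p w z ≤ 2^(p-1) * (‖z‖^p - ‖w‖^p - ℓ z + ℓ w) :=
      aux_KpB hp w ℓ hℓ1 hℓ2 z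
    calc min 1 (min (κ₂/2) (κ₁/2)) ≤ min 1 (κ₂/2) := by
          apply le_min (min_le_left _ _)
          exact le_trans (min_le_right _ _) (min_le_left _ _)
      _ ≤ Kp p w z := hKwz
      _ ≤ Kp p z y + 2^(p-1) * (‖z‖^p - ‖w‖^p - ℓ z + ℓ w) := by linarith
  · -- Case B : z is close to w
    have hKzy : min 1 (κ₁/2) ≤ Kp p z y := by
      have hzn : ‖z‖ ≤ ‖x‖ + 2 := by
        calc ‖z‖ = ‖w + (z - w)‖ := by congr 1; abel
          _ ≤ ‖w‖ + ‖z - w‖ := norm_add_le _ _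
          _ ≤ ‖x‖ + 2 := by linarith [hB, ht1]
      rcases le_or_gt R₂ ‖y‖ with hybig | hysmall
      · exact le_trans (min_le_left _ _) (hcoer z y (by rw [hR₀def]; linarith) hybig)
      · have hyx : r/2 ≤ ‖y - x‖ := by
          have : ‖y - w‖ ≤ ‖y - x‖ + ‖w - x‖ := by
            calc ‖y - w‖ = ‖(y - x) - (w - x)‖ := by congr 1; abel
              _ ≤ ‖y - x‖ + ‖w - x‖ := norm_sub_le _ _
          have : r ≤ ‖y - x‖ + ρ := by linarith
          have hρr : ρ ≤ r/2 := by linarith [hρt, htr, htpos]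
          linarith
        have h1 : κ₁ ≤ Kp p x y := hκ₁ y hyx
        have hzx : ‖z - x‖ ≤ t + ρ := by
          calc ‖z - x‖ = ‖(z - w) + (w - x)‖ := by congr 1; abel
            _ ≤ ‖z - w‖ + ‖w - x‖ := norm_add_le _ _
            _ ≤ t + ρ := by linarith [hB.le]
        have h2 : |Kp p z y - Kp p x y| ≤ L * ‖z - x‖ := by
          rw [hLdef]
          exact aux_Kp_lip hp hRbpos.le z x y (by rw [hRbdef, hR₀def]; linarith [hR₂pos])
            (by rw [hRbdef, hR₀def]; linarith [norm_nonneg (x : X), hR₂pos])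
            (by rw [hRbdef]; linarith)
        have h3 : L * ‖z - x‖ ≤ L * (t + ρ) :=
          mul_le_mul_of_nonneg_left hzx hLpos
        have h4 : L * (t + ρ) ≤ κ₁/2 := by
          have h5 : t * (4*L+1) ≤ κ₁ := by
            rw [div_eq_mul_inv] at htκ
            have h6 : (0:ℝ) < 4*L+1 := by linarith
            calc t * (4*L+1) ≤ (κ₁ * (4*L+1)⁻¹) * (4*L+1) :=
                  mul_le_mul_of_nonneg_right htκ h6.le
              _ = κ₁ := by field_simp
          have h5' : ρ * (4*L+1) ≤ κ₁ := by
            rw [div_eq_mul_inv] at hρκ₁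
            have h6 : (0:ℝ) < 4*L+1 := by linarith
            calc ρ * (4*L+1) ≤ (κ₁ * (4*L+1)⁻¹) * (4*L+1) :=
                  mul_le_mul_of_nonneg_right hρκ₁ h6.le
              _ = κ₁ := by field_simp
          linarith [h5, h5', htpos, hρpos]
        have := abs_le.mp h2
        exact le_trans (min_le_right _ _) (by linarith [this.1])
    have h7 : 0 ≤ 2^(p-1) * (‖z‖^p - ‖w‖^p - ℓ z + ℓ w) := by positivity
    calc min 1 (min (κ₂/2) (κ₁/2)) ≤ min 1 (κ₁/2) := by
          apply le_min (min_le_left _ _)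
          exact le_trans (min_le_right _ _) (min_le_right _ _)
      _ ≤ Kp p z y := hKzy
      _ ≤ Kp p z y + 2^(p-1) * (‖z‖^p - ‖w‖^p - ℓ z + ℓ w) := by linarith

lemma aux_inf_ne_bot (f : X → EReal) {mb : ℝ} (hbdd : ∀ x, (mb : EReal) ≤ f x)
    (n : ℕ) (z : X) : (mb : EReal) ≤ ⨅ y, f y + (((n : ℝ) * Kp p z y : ℝ) : EReal) := by
  apply le_iInf
  intro y
  have h1 : (0 : EReal) ≤ (((n : ℝ) * Kp p z y : ℝ) : EReal) := by
    rw [show (0 : EReal) = ((0:ℝ) : EReal) by norm_cast, EReal.coe_le_coe_iff]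
    exact mul_nonneg (Nat.cast_nonneg n) (aux_Kp_nonneg hp z y)
  calc (mb : EReal) ≤ f y := hbdd y
    _ = f y + 0 := (add_zero _).symm
    _ ≤ f y + (((n : ℝ) * Kp p z y : ℝ) : EReal) := add_le_add le_rfl h1

lemma aux_inf_ne_top (f : X → EReal) (y₀ : X) (hy₀ : f y₀ ≠ ⊤) (n : ℕ) (z : X) :
    (⨅ y, f y + (((n : ℝ) * Kp p z y : ℝ) : EReal)) ≠ ⊤ := by
  apply ne_top_of_le_ne_top (b := f y₀ + (((n : ℝ) * Kp p z y₀ : ℝ) : EReal))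
  · exact (EReal.add_lt_top hy₀ (EReal.coe_ne_top _)).ne
  · exact iInf_le _ y₀

/-- Core lower bound on every element of the convex-envelope defining set. -/
lemma aux_elem_lower (f : X → EReal) {mb : ℝ} (hbdd : ∀ x, (mb : EReal) ≤ f x)
    (y₀ : X) (hy₀ : f y₀ ≠ ⊤)
    (w : X) (ℓ : X →L[ℝ] ℝ)
    (hℓ1 : ℓ w = p * ‖w‖^(p-1) * ‖w‖) (hℓ2 : ∀ z, ℓ z ≤ p * ‖w‖^(p-1) * ‖z‖)
    {r κ M : ℝ} (hκ : 0 ≤ κ)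
    (hball : ∀ y : X, ‖y - w‖ ≤ r → (M : EReal) ≤ f y)
    (hgeom : ∀ z y : X, r ≤ ‖y - w‖ →
      κ ≤ Kp p z y + 2^(p-1) * (‖z‖^p - ‖w‖^p - ℓ z + ℓ w))
    (n : ℕ) (hn : M - mb ≤ (n : ℝ) * κ) :
    ∀ R ∈ { R : ℝ | ∃ (k : ℕ) (l : Fin k → ℝ) (z : Fin k → X),
      (∀ i, 0 < l i) ∧ ∑ i, l i = 1 ∧ ∑ i, l i • z i = w ∧
        ∑ i, l i * (gnp p f n) (z i) = R },
    M + 2^(p-1) * (n : ℝ) * ‖w‖^p ≤ R := by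
  classical
  rintro R ⟨k, l, z, hlpos, hlsum, hzsum, hR⟩
  set c : ℝ := 2^(p-1) with hcdef
  have hcpos : (0:ℝ) < c := Real.rpow_pos_of_pos (by norm_num) _
  have hnn : (0:ℝ) ≤ (n:ℝ) := Nat.cast_nonneg n
  -- pointwise lower bound for the infimum
  have hTz : ∀ i : Fin k,
      M - c * (n:ℝ) * (‖z i‖^p - ‖w‖^p - ℓ (z i) + ℓ w)
        ≤ (⨅ y, f y + (((n : ℝ) * Kp p (z i) y : ℝ) : EReal)).toReal := by
    intro i
    set Bz : ℝ := ‖z i‖^p - ‖w‖^p - ℓ (z i) + ℓ w with hBzdef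
    have hBnn : 0 ≤ Bz := aux_B_nonneg hp w ℓ hℓ1 hℓ2 (z i)
    have hle : ((M - c * (n:ℝ) * Bz : ℝ) : EReal)
        ≤ ⨅ y, f y + (((n : ℝ) * Kp p (z i) y : ℝ) : EReal) := by
      apply le_iInf
      intro y
      rcases le_or_gt ‖y - w‖ r with hyr | hyr
      · have h1 : (M : EReal) ≤ f y := hball y hyr
        have h2 : (M - c * (n:ℝ) * Bz : ℝ) ≤ M + (n:ℝ) * Kp p (z i) y := by
          have := aux_Kp_nonneg hp (z i) y
          nlinarith [mul_nonneg (mul_nonneg hcpos.le hnn) hBnn, mul_nonneg hnn this]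
        calc ((M - c * (n:ℝ) * Bz : ℝ) : EReal)
            ≤ ((M + (n:ℝ) * Kp p (z i) y : ℝ) : EReal) := EReal.coe_le_coe_iff.mpr h2
          _ = (M : EReal) + (((n : ℝ) * Kp p (z i) y : ℝ) : EReal) := by
              rw [← EReal.coe_add]
          _ ≤ f y + (((n : ℝ) * Kp p (z i) y : ℝ) : EReal) := add_le_add h1 le_rfl
      · have h1 : (mb : EReal) ≤ f y := hbdd y
        have hg := hgeom (z i) y hyr.le
        have h2 : (M - c * (n:ℝ) * Bz : ℝ) ≤ mb + (n:ℝ) * Kp p (z i) y := by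
          have h3 : (n:ℝ) * κ ≤ (n:ℝ) * (Kp p (z i) y + c * Bz) :=
            mul_le_mul_of_nonneg_left hg hnn
          nlinarith [h3, hn]
        calc ((M - c * (n:ℝ) * Bz : ℝ) : EReal)
            ≤ ((mb + (n:ℝ) * Kp p (z i) y : ℝ) : EReal) := EReal.coe_le_coe_iff.mpr h2
          _ = (mb : EReal) + (((n : ℝ) * Kp p (z i) y : ℝ) : EReal) := by
              rw [← EReal.coe_add]
          _ ≤ f y + (((n : ℝ) * Kp p (z i) y : ℝ) : EReal) := add_le_add h1 le_rfl
    have hnetop := aux_inf_ne_top hp f y₀ hy₀ n (z i)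
    have hnebot : (⨅ y, f y + (((n : ℝ) * Kp p (z i) y : ℝ) : EReal)) ≠ ⊥ :=
      ne_bot_of_le_ne_bot (EReal.coe_ne_bot mb) (aux_inf_ne_bot hp f hbdd n (z i))
    have := EReal.toReal_le_toReal hle (EReal.coe_ne_bot _) hnetop
    rwa [EReal.toReal_coe] at this
  -- per-index bound for gnp
  have hgnp : ∀ i : Fin k,
      M + c * (n:ℝ) * (‖w‖^p + ℓ (z i) - ℓ w) ≤ gnp p f n (z i) := by
    intro i
    have h1 := hTz i
    simp only [gnp]
    have : (2:ℝ)^(p-1) * (n:ℝ) * ‖z i‖^p = c * (n:ℝ) * ‖z i‖^p := by rw [hcdef]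
    rw [this]
    nlinarith [h1]
  -- sum up
  have hsum : ∑ i, l i * gnp p f n (z i)
      ≥ ∑ i, l i * (M + c * (n:ℝ) * (‖w‖^p + ℓ (z i) - ℓ w)) := by
    apply Finset.sum_le_sum
    intro i _
    exact mul_le_mul_of_nonneg_left (hgnp i) (hlpos i).le
  have hℓsum : ∑ i, l i * ℓ (z i) = ℓ w := by
    rw [← hzsum, map_sum]
    congr 1
    ext i
    rw [map_smul, smul_eq_mul]
  have hexp : ∑ i, l i * (M + c * (n:ℝ) * (‖w‖^p + ℓ (z i) - ℓ w))
      = M + c * (n:ℝ) * ‖w‖^p := by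
    have h2 : ∀ i : Fin k, l i * (M + c * (n:ℝ) * (‖w‖^p + ℓ (z i) - ℓ w))
        = l i * (M + c * (n:ℝ) * ‖w‖^p - c * (n:ℝ) * ℓ w) + (c * (n:ℝ)) * (l i * ℓ (z i)) := by
      intro i; ring
    rw [Finset.sum_congr rfl (fun i _ => h2 i), Finset.sum_add_distrib,
      ← Finset.sum_mul, hlsum, ← Finset.mul_sum, hℓsum]
    ring
  rw [← hR]
  have : (2:ℝ)^(p-1) * (n:ℝ) * ‖w‖^p = c * (n:ℝ) * ‖w‖^p := by rw [hcdef]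
  rw [this]
  linarith [hsum, hexp.symm.le, hexp.le]

lemma aux_mem_self (f : X → EReal) (n : ℕ) (w : X) :
    gnp p f n w ∈ { R : ℝ | ∃ (k : ℕ) (l : Fin k → ℝ) (z : Fin k → X),
      (∀ i, 0 < l i) ∧ ∑ i, l i = 1 ∧ ∑ i, l i • z i = w ∧
        ∑ i, l i * (gnp p f n) (z i) = R } := by
  refine ⟨1, fun _ => 1, fun _ => w, fun _ => one_pos, ?_, ?_, ?_⟩ <;> simp

/-- Lower bound on the convex envelope. -/
lemma aux_env_lower (f : X → EReal) {mb : ℝ} (hbdd : ∀ x, (mb : EReal) ≤ f x)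
    (y₀ : X) (hy₀ : f y₀ ≠ ⊤)
    (w : X) (ℓ : X →L[ℝ] ℝ)
    (hℓ1 : ℓ w = p * ‖w‖^(p-1) * ‖w‖) (hℓ2 : ∀ z, ℓ z ≤ p * ‖w‖^(p-1) * ‖z‖)
    {r κ M : ℝ} (hκ : 0 ≤ κ)
    (hball : ∀ y : X, ‖y - w‖ ≤ r → (M : EReal) ≤ f y)
    (hgeom : ∀ z y : X, r ≤ ‖y - w‖ →
      κ ≤ Kp p z y + 2^(p-1) * (‖z‖^p - ‖w‖^p - ℓ z + ℓ w))
    (n : ℕ) (hn : M - mb ≤ (n : ℝ) * κ) :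
    M ≤ Delta p f n w := by
  have h1 := aux_elem_lower hp f hbdd y₀ hy₀ w ℓ hℓ1 hℓ2 hκ hball hgeom n hn
  have h2 : M + 2^(p-1) * (n : ℝ) * ‖w‖^p ≤ convEnv (gnp p f n) w := by
    apply le_csInf ⟨gnp p f n w, aux_mem_self hp f n w⟩
    exact h1
  simp only [Delta]
  linarith

/-- The trivial lower bound, valid for all `n` : gives boundedness below. -/
lemma aux_env_lower_triv (f : X → EReal) {mb : ℝ} (hbdd : ∀ x, (mb : EReal) ≤ f x)
    (y₀ : X) (hy₀ : f y₀ ≠ ⊤) (w : X) (n : ℕ) :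
    mb ≤ Delta p f n w := by
  obtain ⟨ℓ, hℓ1, hℓ2⟩ := aux_subgrad hp w
  apply aux_env_lower hp f hbdd y₀ hy₀ w ℓ hℓ1 hℓ2 (le_refl (0:ℝ))
    (r := 1) (fun y _ => hbdd y) ?_ n (by simp)
  intro z y _
  have h1 := aux_Kp_nonneg hp z y
  have h2 := aux_B_nonneg hp w ℓ hℓ1 hℓ2 z
  have hcpos : (0:ℝ) < 2^(p-1) := Real.rpow_pos_of_pos (by norm_num) _
  nlinarith

/-- Upper bound : `Delta p f n w ≤ (f w).toReal`. -/
lemma aux_env_upper (f : X → EReal) {mb : ℝ} (hbdd : ∀ x, (mb : EReal) ≤ f x)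
    (y₀ : X) (hy₀ : f y₀ ≠ ⊤) (w : X) (hfw : f w ≠ ⊤) (n : ℕ) :
    Delta p f n w ≤ (f w).toReal := by
  obtain ⟨ℓ, hℓ1, hℓ2⟩ := aux_subgrad hp w
  have hbb : BddBelow { R : ℝ | ∃ (k : ℕ) (l : Fin k → ℝ) (z : Fin k → X),
      (∀ i, 0 < l i) ∧ ∑ i, l i = 1 ∧ ∑ i, l i • z i = w ∧
        ∑ i, l i * (gnp p f n) (z i) = R } := by
    refine ⟨mb + 2^(p-1) * (n : ℝ) * ‖w‖^p, ?_⟩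
    apply aux_elem_lower hp f hbdd y₀ hy₀ w ℓ hℓ1 hℓ2 (le_refl (0:ℝ))
      (r := 1) (fun y _ => hbdd y) ?_ n (by simp)
    intro z y _
    have h1 := aux_Kp_nonneg hp z y
    have h2 := aux_B_nonneg hp w ℓ hℓ1 hℓ2 z
    have hcpos : (0:ℝ) < 2^(p-1) := Real.rpow_pos_of_pos (by norm_num) _
    nlinarith
  have h1 : convEnv (gnp p f n) w ≤ gnp p f n w := csInf_le hbb (aux_mem_self hp f n w)
  have h2 : gnp p f n w ≤ (f w).toReal + 2^(p-1) * (n : ℝ) * ‖w‖^p := by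
    simp only [gnp]
    have h3 : (⨅ y, f y + (((n : ℝ) * Kp p w y : ℝ) : EReal)) ≤ f w := by
      have h4 : (⨅ y, f y + (((n : ℝ) * Kp p w y : ℝ) : EReal))
          ≤ f w + (((n : ℝ) * Kp p w w : ℝ) : EReal) := iInf_le _ w
      rwa [aux_Kp_self hp w, mul_zero, show (((0:ℝ)) : EReal) = (0 : EReal) by norm_cast,
        add_zero] at h4
    have h5 := EReal.toReal_le_toReal h3
      (ne_bot_of_le_ne_bot (EReal.coe_ne_bot mb) (aux_inf_ne_bot hp f hbdd n w)) hfw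
    linarith
  simp only [Delta]
  linarith

end scalar


end Aux

/-- For a Banach space whose norm is locally uniformly convex and uniformly smooth,
`p > 1` and `f` proper, lower semicontinuous and bounded below: `Δ_n^p f → f` pointwise
(in `ℝ ∪ {+∞}`), and uniformly on compact sets when `f` is real-valued and continuous. -/
theorem stmt_2 {X : Type*} [NormedAddCommGroup X] [NormedSpace ℝ X] [CompleteSpace X]
    (hLUR : ∀ x : X, ‖x‖ = 1 → ∀ ε : ℝ, 0 < ε → ∃ δ : ℝ, 0 < δ ∧
      ∀ y : X, ‖y‖ = 1 → ε ≤ ‖x - y‖ → ‖x + y‖ / 2 ≤ 1 - δ)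
    (hUS : Filter.Tendsto
      (fun τ : ℝ => (sSup {r : ℝ | ∃ x y : X, ‖x‖ = 1 ∧ ‖y‖ = 1 ∧
        r = (‖x + τ • y‖ + ‖x - τ • y‖) / 2 - 1}) / τ)
      (nhdsWithin 0 (Set.Ioi (0 : ℝ))) (nhds 0))
    (p : ℝ) (hp : 1 < p)
    (f : X → EReal)
    (hproper : ∃ x, f x ≠ ⊤)
    (hlsc : LowerSemicontinuous f)
    (hbdd : ∃ m : ℝ, ∀ x, (m : EReal) ≤ f x) :
    (∀ x : X, Filter.Tendsto (fun n : ℕ => (Delta p f n x : EReal))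
      Filter.atTop (nhds (f x))) ∧
    (∀ g : X → ℝ, Continuous g → (∀ x, f x = (g x : EReal)) →
      ∀ s : Set X, IsCompact s →
        TendstoUniformlyOn (fun (n : ℕ) (x : X) => Delta p f n x) g Filter.atTop s) := by
  obtain ⟨mb, hmb⟩ := hbdd
  obtain ⟨y₀, hy₀⟩ := hproper
  constructor
  · -- pointwise convergence
    intro x
    by_cases hfx : f x = ⊤
    · rw [hfx, EReal.tendsto_nhds_top_iff_real]
      intro M
      have hlt : ((M+1 : ℝ) : EReal) < f x := by rw [hfx]; exact EReal.coe_lt_top _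
      have hev := hlsc x _ hlt
      rw [Metric.eventually_nhds_iff] at hev
      obtain ⟨d, hdpos, hball'⟩ := hev
      have hrpos : 0 < d/2 := by positivity
      have hball : ∀ y : X, ‖y - x‖ ≤ d/2 → ((M+1:ℝ) : EReal) ≤ f y := by
        intro y hy
        apply le_of_lt
        apply hball'
        rw [dist_eq_norm]; linarith
      obtain ⟨κ, ρ, hκpos, hρpos, hgeom⟩ := aux_geom hp hLUR x hrpos
      obtain ⟨ℓ, hℓ1, hℓ2⟩ := aux_subgrad hp x
      obtain ⟨N, hN⟩ := exists_nat_ge ((M+1-mb)/κ)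
      rw [Filter.eventually_atTop]
      refine ⟨N, fun n hn => ?_⟩
      have hnκ : M+1-mb ≤ (n:ℝ)*κ := by
        rw [div_le_iff₀ hκpos] at hN
        have h1 : (N:ℝ) ≤ (n:ℝ) := Nat.cast_le.mpr hn
        nlinarith [hκpos]
      have hDl : M+1 ≤ Delta p f n x :=
        aux_env_lower hp f hmb y₀ hy₀ x ℓ hℓ1 hℓ2 hκpos.le hball
          (hgeom x ℓ (by simp [hρpos.le]) hℓ1 hℓ2) n hnκ
      exact lt_of_lt_of_le (EReal.coe_lt_coe_iff.mpr (by linarith))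
        (EReal.coe_le_coe_iff.mpr hDl)
    · have hfb : f x ≠ ⊥ := ne_bot_of_le_ne_bot (EReal.coe_ne_bot mb) (hmb x)
      have hfxv : f x = (((f x).toReal : ℝ) : EReal) := (EReal.coe_toReal hfx hfb).symm
      rw [hfxv, EReal.tendsto_coe, Metric.tendsto_atTop]
      intro ε hε
      set v := (f x).toReal with hvdef
      have hup : ∀ n : ℕ, Delta p f n x ≤ v := fun n => aux_env_upper hp f hmb y₀ hy₀ x hfx n
      have hlt : ((v - ε/2 : ℝ) : EReal) < f x := by
        rw [hfxv]
        exact EReal.coe_lt_coe_iff.mpr (by linarith)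
      have hev := hlsc x _ hlt
      rw [Metric.eventually_nhds_iff] at hev
      obtain ⟨d, hdpos, hball'⟩ := hev
      have hrpos : 0 < d/2 := by positivity
      have hball : ∀ y : X, ‖y - x‖ ≤ d/2 → ((v - ε/2 : ℝ) : EReal) ≤ f y := by
        intro y hy
        apply le_of_lt
        apply hball'
        rw [dist_eq_norm]; linarith
      obtain ⟨κ, ρ, hκpos, hρpos, hgeom⟩ := aux_geom hp hLUR x hrpos
      obtain ⟨ℓ, hℓ1, hℓ2⟩ := aux_subgrad hp x
      obtain ⟨N, hN⟩ := exists_nat_ge ((v - ε/2 - mb)/κ)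
      refine ⟨N, fun n hn => ?_⟩
      have hnκ : v - ε/2 - mb ≤ (n:ℝ)*κ := by
        rw [div_le_iff₀ hκpos] at hN
        have h1 : (N:ℝ) ≤ (n:ℝ) := Nat.cast_le.mpr hn
        nlinarith [hκpos]
      have hDl : v - ε/2 ≤ Delta p f n x :=
        aux_env_lower hp f hmb y₀ hy₀ x ℓ hℓ1 hℓ2 hκpos.le hball
          (hgeom x ℓ (by simp [hρpos.le]) hℓ1 hℓ2) n hnκ
      rw [Real.dist_eq, abs_lt]
      constructor <;> [linarith [hup n]; linarith [hup n]]
  · -- uniform convergence on compacts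
    intro g hg hfg s hs
    rw [Metric.tendstoUniformlyOn_iff]
    intro ε hε
    have hmb' : ∀ y : X, mb ≤ g y := by
      intro y
      have := hmb y
      rw [hfg y] at this
      exact_mod_cast this
    have key : ∀ x : X, ∃ (ρ : ℝ) (N : ℕ), 0 < ρ ∧ ∀ n : ℕ, N ≤ n →
        ∀ w : X, ‖w - x‖ < ρ → g w - ε/2 ≤ Delta p f n w := by
      intro x
      obtain ⟨d, hdpos, hd⟩ := Metric.continuousAt_iff.mp hg.continuousAt (ε/8) (by linarith)
      have hrpos : 0 < d/3 := by positivity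
      obtain ⟨κ, ρ₀, hκpos, hρ₀pos, hgeom⟩ := aux_geom hp hLUR x hrpos
      obtain ⟨N, hN⟩ := exists_nat_ge ((g x - mb)/κ)
      refine ⟨min ρ₀ (d/3), N, lt_min hρ₀pos hrpos, ?_⟩
      intro n hn w hw
      obtain ⟨ℓ, hℓ1, hℓ2⟩ := aux_subgrad hp w
      have hwρ : ‖w - x‖ ≤ ρ₀ := le_trans hw.le (min_le_left _ _)
      have hwr : ‖w - x‖ < d/3 := lt_of_lt_of_le hw (min_le_right _ _)
      have hball : ∀ y : X, ‖y - w‖ ≤ d/3 → ((g x - ε/8 : ℝ) : EReal) ≤ f y := by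
        intro y hy
        rw [hfg y]
        apply EReal.coe_le_coe_iff.mpr
        have hyx : dist y x < d := by
          rw [dist_eq_norm]
          have h1 : ‖y - x‖ ≤ ‖y - w‖ + ‖w - x‖ := by
            calc ‖y - x‖ = ‖(y - w) + (w - x)‖ := by congr 1; abel
              _ ≤ ‖y - w‖ + ‖w - x‖ := norm_add_le _ _
          linarith
        have h2 := hd hyx
        rw [Real.dist_eq, abs_lt] at h2
        linarith [h2.1, h2.2]
      have hnκ : (g x - ε/8) - mb ≤ (n:ℝ)*κ := by
        rw [div_le_iff₀ hκpos] at hN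
        have h1 : (N:ℝ) ≤ (n:ℝ) := Nat.cast_le.mpr hn
        nlinarith [hκpos, hε]
      have hDl : g x - ε/8 ≤ Delta p f n w :=
        aux_env_lower hp f hmb y₀ hy₀ w ℓ hℓ1 hℓ2 hκpos.le hball
          (hgeom w ℓ hwρ hℓ1 hℓ2) n hnκ
      have hgw : dist w x < d := by
        rw [dist_eq_norm]; linarith
      have h3 := hd hgw
      rw [Real.dist_eq, abs_lt] at h3
      linarith [h3.1, h3.2]
    choose ρf Nf hρf hkey using key
    obtain ⟨t, ht⟩ := hs.elim_finite_subcover (fun x : X => Metric.ball x (ρf x))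
      (fun x => Metric.isOpen_ball)
      (fun w hw => Set.mem_iUnion.mpr ⟨w, Metric.mem_ball_self (hρf w)⟩)
    rw [Filter.eventually_atTop]
    refine ⟨t.sup Nf, fun n hn w hw => ?_⟩
    have hw2 := ht hw
    rw [Set.mem_iUnion₂] at hw2
    obtain ⟨x, hxt, hwx⟩ := hw2
    have hwx' : ‖w - x‖ < ρf x := by
      rw [← dist_eq_norm]
      exact Metric.mem_ball.mp hwx
    have h1 := hkey x n (le_trans (Finset.le_sup hxt) hn) w hwx'
    have h2 : Delta p f n w ≤ g w := by
      have h3 := aux_env_upper hp f hmb y₀ hy₀ w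
        (by rw [hfg w]; exact EReal.coe_ne_top _) n
      rwa [hfg w, EReal.toReal_coe] at h3
    rw [Real.dist_eq, abs_lt]
    constructor <;> [linarith; linarith]
end
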